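/- arXiv:2301.02936 — 10 statements merged into one kernel-verified Lean document; each statement's English description precedes it below -/
import Mathlib

section
/- Every splittable pattern is collectable: if a pattern P of uniformity r can be split into consecutive blocks each of the form A^t B^t or B^t A^t, then for every k ≥ 2 there exists an ordered r-uniform matching of size k in which every pair of edges forms a copy of P. -/
/-- The word `w` can be partitioned into consecutive blocks, each being a run of one
letter followed by an equal-length run of the other letter. -/
def Splittable (r : ℕ) (w : ℕ → Bool) : Prop :=
  ∃ (k : ℕ) (c : ℕ → ℕ), c 0 = 0 ∧ c k = 2 * r ∧
    ∀ i < k, ∃ t, 1 ≤ t ∧ c (i + 1) = c i + 2 * t ∧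
      (∀ j, c i ≤ j → j < c i + t → w j = w (c i)) ∧
      (∀ j, c i + t ≤ j → j < c i + 2 * t → w j = !(w (c i)))

/-- Two disjoint `r`-sets `e`, `f` of naturals form the pattern given by word `p`
(`true` = letter of `e`): the increasing enumeration of `e ∪ f` hits `e` exactly at
the positions where `p` is `true`. -/
def FormsPattern (r : ℕ) (p : ℕ → Bool) (e f : Finset ℕ) : Prop :=
  Disjoint e f ∧ e.card = r ∧ f.card = r ∧
  ∃ h : (e ∪ f).card = 2 * r,
    ∀ i : Fin (2 * r), (((e ∪ f).orderIsoOfFin h i : ℕ) ∈ e) ↔ p i = true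

/-- Every splittable pattern is collectable: for every `k ≥ 2` there is an ordered
`r`-uniform matching of size `k` in which every pair of edges forms pattern `P`. -/
theorem stmt_3 (r : ℕ) (hr : 2 ≤ r) (p : ℕ → Bool) (hp0 : p 0 = true)
    (hsp : Splittable r p) :
    ∀ k, 2 ≤ k → ∃ M : Finset (Finset ℕ),
      M.card = k ∧ (∀ e ∈ M, e.card = r) ∧
      (∀ e ∈ M, ∀ f ∈ M, e ≠ f → Disjoint e f) ∧
      (∀ e ∈ M, ∀ f ∈ M, e ≠ f → FormsPattern r p e f ∨ FormsPattern r p f e) := by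
  intro k hk
  obtain ⟨K, c, hc0, hcK, hblk⟩ := hsp
  -- extract block half-lengths
  have hblk' : ∀ i, ∃ t, i < K → (1 ≤ t ∧ c (i + 1) = c i + 2 * t ∧
      (∀ j, c i ≤ j → j < c i + t → p j = p (c i)) ∧
      (∀ j, c i + t ≤ j → j < c i + 2 * t → p j = !(p (c i)))) := by
    intro i
    by_cases h : i < K
    · obtain ⟨t, ht⟩ := hblk i h; exact ⟨t, fun _ => ht⟩
    · exact ⟨0, fun h' => absurd h' h⟩
  choose t ht using hblk'
  have ht1 : ∀ i, i < K → 1 ≤ t i := fun i hi => (ht i hi).1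
  have htc : ∀ i, i < K → c (i + 1) = c i + 2 * t i := fun i hi => (ht i hi).2.1
  have hKpos : 0 < K := by
    rcases Nat.eq_zero_or_pos K with h | h
    · rw [h, hc0] at hcK; omega
    · exact h
  -- c is given by partial sums
  have hsum : ∀ n, n ≤ K → c n = 2 * ∑ i ∈ Finset.range n, t i := by
    intro n hn
    induction n with
    | zero => simpa using hc0
    | succ n ih =>
      rw [htc n (by omega), ih (by omega), Finset.sum_range_succ]
      ring
  have htr : ∑ i ∈ Finset.range K, t i = r := by
    have := hsum K le_rfl; omega
  have hmono : ∀ i j, i ≤ j → j ≤ K → c i ≤ c j := by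
    intro i j hij hjK
    rw [hsum i (by omega), hsum j hjK]
    have : ∑ a ∈ Finset.range i, t a ≤ ∑ a ∈ Finset.range j, t a :=
      Finset.sum_le_sum_of_subset (Finset.range_subset_range.2 hij)
    omega
  -- block locator
  set b : ℕ → ℕ := fun j => Nat.findGreatest (fun i => c i ≤ j) K with hbdef
  have hbK : ∀ j, b j ≤ K := fun j => Nat.findGreatest_le K
  have hble : ∀ j, c (b j) ≤ j := by
    intro j
    exact Nat.findGreatest_spec (P := fun i => c i ≤ j) (Nat.zero_le K)
      (by show c 0 ≤ j; rw [hc0]; exact Nat.zero_le j)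
  have hblt : ∀ j, j < 2 * r → b j < K := by
    intro j hj
    rcases Nat.lt_or_ge (b j) K with h | h
    · exact h
    · have hbj : b j = K := le_antisymm (hbK j) h
      have := hble j; rw [hbj, hcK] at this; omega
  have hbub : ∀ j, j < 2 * r → j < c (b j + 1) := by
    intro j hj
    by_contra h
    push_neg at h
    have h1 : b j + 1 ≤ b j :=
      Nat.le_findGreatest (by have := hblt j hj; omega) h
    omega
  have hbmono : ∀ j j', j ≤ j' → b j ≤ b j' := by
    intro j j' hjj
    exact Nat.le_findGreatest (hbK j) (le_trans (hble j) hjj)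
  -- the chunks and edges
  set σ : ℕ → ℕ → ℕ := fun i m => if p (c i) then m else k - 1 - m with hσdef
  have hσlt : ∀ i m, m < k → σ i m < k := by
    intro i m hm; simp only [hσdef]; split <;> omega
  have hσinj : ∀ i m m', m < k → m' < k → σ i m = σ i m' → m = m' := by
    intro i m m' hm hm' h; simp only [hσdef] at h; split at h <;> omega
  set chunk : ℕ → ℕ → Finset ℕ :=
    fun i m => Finset.Ico (k * c i + σ i m * t i) (k * c i + σ i m * t i + t i) with hchunkdef
  set E : ℕ → Finset ℕ := fun m => (Finset.range K).biUnion (fun i => chunk i m) with hEdef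
  -- chunk is inside the block interval
  have hchunk_sub : ∀ i m, i < K → m < k →
      chunk i m ⊆ Finset.Ico (k * c i) (k * c (i + 1)) := by
    intro i m hi hm x hx
    simp only [hchunkdef, Finset.mem_Ico] at hx ⊢
    have h1 : σ i m * t i + t i ≤ k * (2 * t i) := by
      have h2 : σ i m + 1 ≤ k := hσlt i m hm
      calc σ i m * t i + t i = (σ i m + 1) * t i := by ring
        _ ≤ k * t i := Nat.mul_le_mul_right _ h2
        _ ≤ k * (2 * t i) := Nat.mul_le_mul_left _ (by omega)
    rw [htc i hi, Nat.mul_add]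
    omega
  -- chunks in different blocks are disjoint (as far as membership goes)
  have hblock_lt : ∀ i i', i < i' → i' ≤ K → k * c (i + 1) ≤ k * c i' :=
    fun i i' h h' => Nat.mul_le_mul_left _ (hmono _ _ (by omega) h')
  have hmem_not : ∀ i i' m m', i < K → i' < K → m < k → m' < k → i ≠ i' →
      ∀ x, x ∈ chunk i m → x ∉ chunk i' m' := by
    intro i i' m m' hi hi' hm hm' hne x hx hx'
    have h1 := hchunk_sub i m hi hm hx
    have h2 := hchunk_sub i' m' hi' hm' hx'
    simp only [Finset.mem_Ico] at h1 h2
    rcases Nat.lt_or_ge i i' with h | h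
    · have := hblock_lt i i' h (by omega); omega
    · have hlt : i' < i := by omega
      have := hblock_lt i' i hlt (by omega); omega
  -- chunks with distinct σ in the same block are disjoint
  have hmem_not_same : ∀ i m m', m < k → m' < k → m ≠ m' →
      ∀ x, x ∈ chunk i m → x ∉ chunk i m' := by
    intro i m m' hm hm' hne x hx hx'
    simp only [hchunkdef, Finset.mem_Ico] at hx hx'
    have hσne : σ i m ≠ σ i m' := fun h => hne (hσinj i m m' hm hm' h)
    rcases Nat.lt_or_ge (σ i m) (σ i m') with h | h
    · have : (σ i m + 1) * t i ≤ σ i m' * t i := Nat.mul_le_mul_right _ (by omega)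
      have h2 : σ i m * t i + t i ≤ σ i m' * t i := by linarith [this]
      omega
    · have hlt : σ i m' < σ i m := by omega
      have : (σ i m' + 1) * t i ≤ σ i m * t i := Nat.mul_le_mul_right _ (by omega)
      have h2 : σ i m' * t i + t i ≤ σ i m * t i := by linarith [this]
      omega
  -- edges are disjoint
  have hEdisj : ∀ m m', m < k → m' < k → m ≠ m' → Disjoint (E m) (E m') := by
    intro m m' hm hm' hne
    rw [Finset.disjoint_left]
    intro x hx hx'
    simp only [hEdef, Finset.mem_biUnion, Finset.mem_range] at hx hx'
    obtain ⟨i, hi, hxi⟩ := hx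
    obtain ⟨i', hi', hxi'⟩ := hx'
    rcases eq_or_ne i i' with rfl | hii
    · exact hmem_not_same i m m' hm hm' hne x hxi hxi'
    · exact hmem_not i i' m m' hi hi' hm hm' hii x hxi hxi'
  -- edge cardinality
  have hEcard : ∀ m, m < k → (E m).card = r := by
    intro m hm
    rw [hEdef]
    rw [Finset.card_biUnion]
    · have : ∀ i ∈ Finset.range K, (chunk i m).card = t i := by
        intro i _
        simp [hchunkdef, Nat.card_Ico]
      rw [Finset.sum_congr rfl this, htr]
    · intro i hi i' hi' hne
      simp only [Finset.mem_coe, Finset.mem_range] at hi hi'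
      show Disjoint (chunk i m) (chunk i' m)
      rw [Finset.disjoint_left]
      intro x hx
      exact hmem_not i i' m m hi hi' hm hm hne x hx
  have hEne : ∀ m, m < k → (E m).Nonempty := by
    intro m hm
    refine ⟨k * c 0 + σ 0 m * t 0, ?_⟩
    simp only [hEdef, Finset.mem_biUnion, Finset.mem_range]
    refine ⟨0, hKpos, ?_⟩
    simp only [hchunkdef, Finset.mem_Ico]
    have := ht1 0 hKpos
    omega
  -- the key: any two edges form the pattern
  have hmain : ∀ m m', m < m' → m' < k → FormsPattern r p (E m) (E m') := by
    intro m m' hmm hm'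
    have hm : m < k := by omega
    have hdisj := hEdisj m m' hm hm' (by omega)
    have hcard : (E m ∪ E m').card = 2 * r := by
      rw [Finset.card_union_of_disjoint hdisj, hEcard m hm, hEcard m' hm']
      ring
    refine ⟨hdisj, hEcard m hm, hEcard m' hm', hcard, ?_⟩
    -- the enumeration function
    set g : ℕ → ℕ := fun j =>
      if j < c (b j) + t (b j)
      then k * c (b j) + σ (b j) (if p (c (b j)) then m else m') * t (b j) + (j - c (b j))
      else k * c (b j) + σ (b j) (if p (c (b j)) then m' else m) * t (b j) + (j - (c (b j) + t (b j)))
      with hgdef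
    -- the "e-position" predicate
    set Pe : ℕ → Prop := fun j => (p (c (b j)) = true ∧ j < c (b j) + t (b j)) ∨
      (p (c (b j)) = false ∧ ¬ j < c (b j) + t (b j)) with hPedef
    have hbup : ∀ j, j < 2 * r → j < c (b j) + 2 * t (b j) := by
      intro j hj
      have := hbub j hj
      rw [htc (b j) (hblt j hj)] at this
      exact this
    -- membership of g
    have hgchunk : ∀ j, j < 2 * r →
        (Pe j → g j ∈ chunk (b j) m) ∧ (¬ Pe j → g j ∈ chunk (b j) m') := by
      intro j hj
      have h1 := hble j
      have h2 := hbup j hj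
      constructor
      · intro hPe
        simp only [hPedef] at hPe
        simp only [hgdef, hchunkdef, Finset.mem_Ico]
        rcases hPe with ⟨hp, hlt⟩ | ⟨hp, hlt⟩
        · rw [if_pos hlt, if_pos hp]
          omega
        · rw [if_neg hlt, if_neg (by simp [hp])]
          omega
      · intro hPe
        simp only [hPedef] at hPe
        push_neg at hPe
        simp only [hgdef, hchunkdef, Finset.mem_Ico]
        by_cases hlt : j < c (b j) + t (b j)
        · have hp : p (c (b j)) = false := by
            rcases hPe with ⟨hPe1, _⟩
            cases hpv : p (c (b j))
            · rfl
            · exact absurd hlt (by simpa [hpv] using hPe1)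
          rw [if_pos hlt, if_neg (by simp [hp])]
          omega
        · have hp : p (c (b j)) = true := by
            rcases hPe with ⟨_, hPe2⟩
            cases hpv : p (c (b j))
            · exact absurd (hPe2 hpv) hlt
            · rfl
          rw [if_neg hlt, if_pos hp]
          omega
    have hgE : ∀ j, j < 2 * r → (Pe j → g j ∈ E m) ∧ (¬ Pe j → g j ∈ E m') := by
      intro j hj
      have h := hgchunk j hj
      constructor
      · intro hPe
        simp only [hEdef, Finset.mem_biUnion, Finset.mem_range]
        exact ⟨b j, hblt j hj, h.1 hPe⟩
      · intro hPe
        simp only [hEdef, Finset.mem_biUnion, Finset.mem_range]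
        exact ⟨b j, hblt j hj, h.2 hPe⟩
    -- Pe matches p
    have hPep : ∀ j, j < 2 * r → (p j = true ↔ Pe j) := by
      intro j hj
      have hi := hblt j hj
      have h1 := hble j
      have h2 := hbup j hj
      obtain ⟨-, -, hfirst, hsecond⟩ := ht (b j) hi
      by_cases hlt : j < c (b j) + t (b j)
      · have := hfirst j h1 hlt
        simp only [hPedef]
        rw [this]
        cases hpv : p (c (b j)) <;> simp [hpv, hlt]
      · have := hsecond j (by omega) (by omega)
        simp only [hPedef]
        rw [this]
        cases hpv : p (c (b j)) <;> simp [hpv, hlt]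
    -- g is strictly monotone (on the relevant range)
    have hgmono : ∀ j j', j < j' → j' < 2 * r → g j < g j' := by
      intro j j' hjj hj'
      have hj : j < 2 * r := by omega
      have hble1 := hble j
      have hble2 := hble j'
      have hup1 := hbup j hj
      have hup2 := hbup j' hj'
      rcases Nat.lt_or_ge (b j) (b j') with hbb | hbb
      · -- different blocks
        have hgin : g j ∈ chunk (b j) (if Pe j then m else m') := by
          by_cases hPe : Pe j
          · rw [if_pos hPe]; exact (hgchunk j hj).1 hPe
          · rw [if_neg hPe]; exact (hgchunk j hj).2 hPe
        have hsub := hchunk_sub (b j) _ (hblt j hj) (by split <;> omega) hgin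
        simp only [Finset.mem_Ico] at hsub
        have h3 : k * c (b j + 1) ≤ k * c (b j') := hblock_lt _ _ hbb (hbK j')
        have h4 : k * c (b j') ≤ g j' := by
          simp only [hgdef]
          split <;> omega
        omega
      · have hbb' : b j' = b j := le_antisymm (by omega) (hbmono j j' (by omega))
        -- same block
        rw [hbb'] at hble2 hup2
        simp only [hgdef]
        rw [hbb']
        by_cases hlt : j < c (b j) + t (b j)
        · by_cases hlt' : j' < c (b j) + t (b j)
          · -- both first half
            rw [if_pos hlt, if_pos hlt']
            omega
          · -- j first half, j' second half
            rw [if_pos hlt, if_neg hlt']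
            have hσσ : σ (b j) (if p (c (b j)) = true then m else m') + 1 ≤
                σ (b j) (if p (c (b j)) = true then m' else m) := by
              by_cases hpv : p (c (b j)) = true
              · simp only [hσdef, if_pos hpv]; omega
              · simp only [hσdef, if_neg hpv]; omega
            have hmul : (σ (b j) (if p (c (b j)) = true then m else m') + 1) * t (b j) ≤
                σ (b j) (if p (c (b j)) = true then m' else m) * t (b j) :=
              Nat.mul_le_mul_right _ hσσ
            rw [Nat.add_mul, one_mul] at hmul
            omega
        · have hlt' : ¬ j' < c (b j) + t (b j) := by omega
          -- both second half
          rw [if_neg hlt, if_neg hlt']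
          omega
    -- conclude via orderEmbOfFin uniqueness
    set f' : Fin (2 * r) → ℕ := fun j => g j with hf'def
    have hf'mem : ∀ x : Fin (2 * r), f' x ∈ E m ∪ E m' := by
      intro x
      rw [Finset.mem_union]
      by_cases hPe : Pe x
      · exact Or.inl ((hgE x x.isLt).1 hPe)
      · exact Or.inr ((hgE x x.isLt).2 hPe)
    have hf'mono : StrictMono f' := by
      intro a b hab
      exact hgmono a b hab b.isLt
    have huniq := Finset.orderEmbOfFin_unique hcard hf'mem hf'mono
    intro i
    rw [Finset.coe_orderIsoOfFin_apply, ← huniq]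
    have hiub : (i : ℕ) < 2 * r := i.isLt
    constructor
    · intro hmem
      by_contra hp'
      have hPe : ¬ Pe i := fun h => hp' ((hPep i hiub).2 h)
      have := (hgE i hiub).2 hPe
      exact (Finset.disjoint_left.1 hdisj hmem) this
    · intro hp'
      exact (hgE i hiub).1 ((hPep i hiub).1 hp')
  -- assemble the matching
  refine ⟨(Finset.range k).image E, ?_, ?_, ?_, ?_⟩
  · rw [Finset.card_image_of_injOn, Finset.card_range]
    intro a ha a' ha' hEa
    simp only [Finset.mem_coe, Finset.mem_range] at ha ha'
    by_contra hne
    have hd := hEdisj a a' ha ha' hne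
    obtain ⟨x, hx⟩ := hEne a ha
    exact Finset.disjoint_left.1 hd hx (hEa ▸ hx)
  · intro e he
    simp only [Finset.mem_image, Finset.mem_range] at he
    obtain ⟨a, ha, rfl⟩ := he
    exact hEcard a ha
  · intro e he f hf hne
    simp only [Finset.mem_image, Finset.mem_range] at he hf
    obtain ⟨a, ha, rfl⟩ := he
    obtain ⟨a', ha', rfl⟩ := hf
    exact hEdisj a a' ha ha' (fun h => hne (h ▸ rfl))
  · intro e he f hf hne
    simp only [Finset.mem_image, Finset.mem_range] at he hf
    obtain ⟨a, ha, rfl⟩ := he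
    obtain ⟨a', ha', rfl⟩ := hf
    have hne' : a ≠ a' := fun h => hne (h ▸ rfl)
    rcases Nat.lt_or_ge a a' with h | h
    · exact Or.inl (hmain a a' h ha')
    · exact Or.inr (hmain a' a (by omega) ha)
end

section
/- If an r-pattern P is not splittable, then every P-clique has size at most 2; in particular there exists no set of three pairwise-disjoint edges on a linearly ordered vertex set such that every pair of them forms pattern P. -/
namespace Stmt4Aux

def cnt (q : ℕ → Bool) (n : ℕ) : ℕ := ((Finset.range n).filter (fun a => q a = true)).card

lemma cnt_succ (q : ℕ → Bool) (n : ℕ) :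
    cnt q (n+1) = cnt q n + (if q n = true then 1 else 0) := by
  unfold cnt
  by_cases h : q n = true
  · rw [if_pos h, Finset.range_add_one, Finset.filter_insert, if_pos h,
      Finset.card_insert_of_notMem (by simp)]
  · rw [if_neg h, Finset.range_add_one, Finset.filter_insert, if_neg h, add_zero]

lemma cnt_mono (q : ℕ → Bool) {n m : ℕ} (h : n ≤ m) : cnt q n ≤ cnt q m :=
  Finset.card_le_card (Finset.filter_subset_filter _ (Finset.range_subset_range.2 h))

lemma cnt_add_not (q : ℕ → Bool) (n : ℕ) : cnt q n + cnt (fun a => !q a) n = n := by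
  have h := Finset.card_filter_add_card_filter_not
    (s := Finset.range n) (p := fun a => q a = true)
  rw [Finset.card_range] at h
  have : (Finset.range n).filter (fun a => ¬ q a = true)
      = (Finset.range n).filter (fun a => (!q a) = true) := by
    apply Finset.filter_congr; intro a _; simp
  rw [this] at h
  exact h

lemma cnt_run_true (q : ℕ → Bool) {c n : ℕ} (hc : c ≤ n)
    (h : ∀ j, c ≤ j → j < n → q j = true) : cnt q n = cnt q c + (n - c) := by
  induction n, hc using Nat.le_induction with
  | base => simp
  | succ n hn ih =>
      rw [cnt_succ, ih (fun j hj hj' => h j hj (by omega)), if_pos (h n hn (by omega))]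
      omega

lemma cnt_run_false (q : ℕ → Bool) {c n : ℕ} (hc : c ≤ n)
    (h : ∀ j, c ≤ j → j < n → q j = false) : cnt q n = cnt q c := by
  induction n, hc using Nat.le_induction with
  | base => rfl
  | succ n hn ih =>
      rw [cnt_succ, ih (fun j hj hj' => h j hj (by omega)),
        if_neg (by simp [h n hn (by omega)]), add_zero]

lemma cnt_exists (q : ℕ → Bool) (N j : ℕ) (h : j < cnt q N) :
    ∃ n, n < N ∧ q n = true ∧ cnt q n = j := by
  induction N with
  | zero => simp [cnt] at h
  | succ N ih =>
      by_cases hle : j < cnt q N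
      · obtain ⟨n, h1, h2, h3⟩ := ih hle; exact ⟨n, by omega, h2, h3⟩
      · have hq : q N = true := by
          by_contra hq
          rw [cnt_succ, if_neg hq] at h; omega
        refine ⟨N, by omega, hq, ?_⟩
        rw [cnt_succ, if_pos hq] at h; omega

lemma card_filter_fin_lt {N : ℕ} (q : ℕ → Bool) (m : Fin N) :
    (Finset.univ.filter (fun k : Fin N => k < m ∧ q k.val = true)).card = cnt q m.val := by
  rw [cnt, ← Finset.card_image_of_injective _ Fin.val_injective]
  congr 1
  ext a
  simp only [Finset.mem_image, Finset.mem_filter, Finset.mem_univ, true_and,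
    Finset.mem_range]
  constructor
  · rintro ⟨k, ⟨hk, hq⟩, rfl⟩; exact ⟨hk, hq⟩
  · rintro ⟨ha, hq⟩; exact ⟨⟨a, lt_trans ha m.isLt⟩, ⟨ha, hq⟩, rfl⟩

lemma card_filter_lt_fin {n : ℕ} (i : Fin n) :
    (Finset.univ.filter (fun j : Fin n => j < i)).card = i.val := by
  rw [← Finset.card_range i.val, ← Finset.card_image_of_injective _ Fin.val_injective]
  congr 1
  ext a
  simp only [Finset.mem_image, Finset.mem_filter, Finset.mem_univ, true_and,
    Finset.mem_range]
  constructor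
  · rintro ⟨k, hk, rfl⟩; exact hk
  · rintro ha; exact ⟨⟨a, lt_trans ha i.isLt⟩, ha, rfl⟩

lemma count_below (s : Finset ℕ) {n : ℕ} (hs : s.card = n) (i : Fin n) :
    (s.filter (· < s.orderEmbOfFin hs i)).card = i.val := by
  have himg : s.filter (· < s.orderEmbOfFin hs i)
      = (Finset.univ.filter (fun j : Fin n => j < i)).image (s.orderEmbOfFin hs) := by
    ext a
    simp only [Finset.mem_filter, Finset.mem_image, Finset.mem_univ, true_and]
    constructor
    · rintro ⟨ha, hlt⟩
      obtain ⟨j, rfl⟩ : ∃ j, s.orderEmbOfFin hs j = a := by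
        have : a ∈ Set.range (s.orderEmbOfFin hs) := by
          rw [Finset.range_orderEmbOfFin]; exact ha
        exact this
      exact ⟨j, (s.orderEmbOfFin hs).lt_iff_lt.1 hlt, rfl⟩
    · rintro ⟨j, hj, rfl⟩
      exact ⟨Finset.orderEmbOfFin_mem s hs j, (s.orderEmbOfFin hs).lt_iff_lt.2 hj⟩
  rw [himg, Finset.card_image_of_injective _ (s.orderEmbOfFin hs).injective,
    card_filter_lt_fin]

lemma count_inj (s : Finset ℕ) {a b : ℕ} (ha : a ∈ s) (hb : b ∈ s)
    (h : (s.filter (· < a)).card = (s.filter (· < b)).card) : a = b := by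
  rcases lt_trichotomy a b with hab | hab | hab
  · exfalso
    have hsub : s.filter (· < a) ⊆ s.filter (· < b) :=
      Finset.monotone_filter_right s (fun x _ hx => lt_trans hx hab)
    have : s.filter (· < a) ⊂ s.filter (· < b) :=
      (Finset.ssubset_iff_of_subset hsub).2
        ⟨a, Finset.mem_filter.2 ⟨ha, hab⟩, fun hmem => by
          simp only [Finset.mem_filter] at hmem; omega⟩
    have := Finset.card_lt_card this
    omega
  · exact hab
  · exfalso
    have hsub : s.filter (· < b) ⊆ s.filter (· < a) :=
      Finset.monotone_filter_right s (fun x _ hx => lt_trans hx hab)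
    have : s.filter (· < b) ⊂ s.filter (· < a) :=
      (Finset.ssubset_iff_of_subset hsub).2
        ⟨b, Finset.mem_filter.2 ⟨hb, hab⟩, fun hmem => by
          simp only [Finset.mem_filter] at hmem; omega⟩
    have := Finset.card_lt_card this
    omega

lemma emb_eq {N n : ℕ} (U s : Finset ℕ) (hU : U.card = N) (hs : s.card = n)
    (hsub : s ⊆ U) (q : ℕ → Bool)
    (hmem : ∀ k : Fin N, U.orderEmbOfFin hU k ∈ s ↔ q k.val = true)
    (m : Fin N) (hq : q m.val = true) (i : Fin n) (hi : cnt q m.val = i.val) :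
    U.orderEmbOfFin hU m = s.orderEmbOfFin hs i := by
  have hmemU : U.orderEmbOfFin hU m ∈ s := (hmem m).2 hq
  apply count_inj s hmemU (Finset.orderEmbOfFin_mem s hs i)
  rw [count_below]
  have himg : s.filter (· < U.orderEmbOfFin hU m)
      = (Finset.univ.filter (fun k : Fin N => k < m ∧ q k.val = true)).image
          (U.orderEmbOfFin hU) := by
    ext a
    simp only [Finset.mem_filter, Finset.mem_image, Finset.mem_univ, true_and]
    constructor
    · rintro ⟨ha, hlt⟩
      obtain ⟨k, rfl⟩ : ∃ k, U.orderEmbOfFin hU k = a := by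
        have : a ∈ Set.range (U.orderEmbOfFin hU) := by
          rw [Finset.range_orderEmbOfFin]; exact hsub ha
        exact this
      exact ⟨k, ⟨(U.orderEmbOfFin hU).lt_iff_lt.1 hlt, (hmem k).1 ha⟩, rfl⟩
    · rintro ⟨k, ⟨hk, hqk⟩, rfl⟩
      exact ⟨(hmem k).2 hqk, (U.orderEmbOfFin hU).lt_iff_lt.2 hk⟩
  rw [himg, Finset.card_image_of_injective _ (U.orderEmbOfFin hU).injective,
    card_filter_fin_lt, hi]

lemma pair {r : ℕ} {p : ℕ → Bool} {e f : Finset ℕ}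
    (hform : FormsPattern r p e f)
    {i j : Fin r} {n₁ n₂ : ℕ} (h₁ : n₁ < 2*r) (h₂ : n₂ < 2*r)
    (hq₁ : p n₁ = true) (hq₂ : p n₂ = false)
    (hi : cnt p n₁ = i.val) (hj : cnt (fun a => !p a) n₂ = j.val) :
    (e.orderEmbOfFin hform.2.1 i < f.orderEmbOfFin hform.2.2.1 j ↔ n₁ < n₂) ∧
    (e.orderEmbOfFin hform.2.1 i = f.orderEmbOfFin hform.2.2.1 j ↔ n₁ = n₂) := by
  obtain ⟨hU, hiso⟩ := hform.2.2.2
  have hd := hform.1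
  have hmemE : ∀ k : Fin (2*r), (e ∪ f).orderEmbOfFin hU k ∈ e ↔ p k.val = true := by
    intro k
    rw [← Finset.coe_orderIsoOfFin_apply]
    exact hiso k
  have hmemF : ∀ k : Fin (2*r), (e ∪ f).orderEmbOfFin hU k ∈ f ↔ (!p k.val) = true := by
    intro k
    have hk : (e ∪ f).orderEmbOfFin hU k ∈ e ∪ f := Finset.orderEmbOfFin_mem _ hU k
    constructor
    · intro hkf
      have : ¬ ((e ∪ f).orderEmbOfFin hU k ∈ e) := fun he' =>
        (Finset.disjoint_left.1 hd he') hkf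
      simp only [Bool.not_eq_true']
      rw [← Bool.not_eq_true]
      exact fun hp => this ((hmemE k).2 hp)
    · intro hnp
      rcases Finset.mem_union.1 hk with he' | hf'
      · exfalso
        have := (hmemE k).1 he'
        simp [this] at hnp
      · exact hf'
  have ha := emb_eq (e ∪ f) e hU hform.2.1 Finset.subset_union_left p hmemE
    ⟨n₁, h₁⟩ hq₁ i hi
  have hb := emb_eq (e ∪ f) f hU hform.2.2.1 Finset.subset_union_right (fun a => !p a) hmemF
    ⟨n₂, h₂⟩ (by simp [hq₂]) j hj
  rw [← ha, ← hb]
  constructor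
  · rw [((e ∪ f).orderEmbOfFin hU).lt_iff_lt]
    exact Fin.mk_lt_mk
  · rw [((e ∪ f).orderEmbOfFin hU).injective.eq_iff]
    exact Fin.mk_eq_mk

lemma min_lt {r : ℕ} {p : ℕ → Bool} (hp0 : p 0 = true) (hr : 0 < r) {e f : Finset ℕ}
    (hform : FormsPattern r p e f) (he : e.Nonempty) (hf : f.Nonempty) :
    e.min' he < f.min' hf := by
  obtain ⟨hU, hiso⟩ := hform.2.2.2
  have hd := hform.1
  set σ0 := (e ∪ f).orderEmbOfFin hU ⟨0, by omega⟩ with hσ0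
  have h0e : σ0 ∈ e := by
    have := hiso ⟨0, by omega⟩
    rw [Finset.coe_orderIsoOfFin_apply] at this
    exact this.2 hp0
  have hle : ∀ a ∈ e ∪ f, σ0 ≤ a := by
    intro a ha
    obtain ⟨k, rfl⟩ : ∃ k, (e ∪ f).orderEmbOfFin hU k = a := by
      have : a ∈ Set.range ((e ∪ f).orderEmbOfFin hU) := by
        rw [Finset.range_orderEmbOfFin]; exact ha
      exact this
    exact ((e ∪ f).orderEmbOfFin hU).monotone (by simp [Fin.le_def])
  have h1 : e.min' he ≤ σ0 := Finset.min'_le _ _ h0e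
  have h2 : σ0 ≤ f.min' hf :=
    hle _ (Finset.mem_union_right _ (f.min'_mem hf))
  have h3 : σ0 ≠ f.min' hf := fun h =>
    (Finset.disjoint_left.1 hd h0e) (h ▸ f.min'_mem hf)
  omega

lemma key (r : ℕ) (p : ℕ → Bool) (hcount : cnt p (2*r) = r)
    (x y z : ℕ → ℕ)
    (hxy : ∀ i j n₁ n₂, n₁ < 2*r → n₂ < 2*r → p n₁ = true → p n₂ = false →
      cnt p n₁ = i → cnt (fun a => !p a) n₂ = j →
      ((x i < y j ↔ n₁ < n₂) ∧ (x i = y j ↔ n₁ = n₂)))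
    (hxz : ∀ i j n₁ n₂, n₁ < 2*r → n₂ < 2*r → p n₁ = true → p n₂ = false →
      cnt p n₁ = i → cnt (fun a => !p a) n₂ = j →
      ((x i < z j ↔ n₁ < n₂) ∧ (x i = z j ↔ n₁ = n₂)))
    (hyz : ∀ i j n₁ n₂, n₁ < 2*r → n₂ < 2*r → p n₁ = true → p n₂ = false →
      cnt p n₁ = i → cnt (fun a => !p a) n₂ = j →
      ((y i < z j ↔ n₁ < n₂) ∧ (y i = z j ↔ n₁ = n₂))) :
    Splittable r p := by
  have hFcount : cnt (fun a => !p a) (2*r) = r := by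
    have := cnt_add_not p (2*r); omega
  suffices H : ∀ d c, 2*r - c = d → c ≤ 2*r → 2 * cnt p c = c →
      ∃ (k : ℕ) (cf : ℕ → ℕ), cf 0 = c ∧ cf k = 2*r ∧
      ∀ i < k, ∃ t, 1 ≤ t ∧ cf (i+1) = cf i + 2*t ∧
        (∀ j, cf i ≤ j → j < cf i + t → p j = p (cf i)) ∧
        (∀ j, cf i + t ≤ j → j < cf i + 2*t → p j = !(p (cf i))) by
    obtain ⟨k, cf, h1, h2, h3⟩ := H (2*r) 0 rfl (by omega) (by simp [cnt])
    exact ⟨k, cf, h1, h2, h3⟩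
  intro d
  induction d using Nat.strong_induction_on with
  | _ d ih =>
  intro c hd hcle hbal
  rcases eq_or_lt_of_le hcle with hceq | hclt
  · exact ⟨0, fun _ => c, rfl, hceq, by omega⟩
  · set X := p c with hX
    have hQ'ex : ∃ s, c + s = 2*r ∨ p (c+s) ≠ X := ⟨2*r - c, Or.inl (by omega)⟩
    set t := Nat.find hQ'ex with htdef
    have hQt : c + t = 2*r ∨ p (c+t) ≠ X := Nat.find_spec hQ'ex
    have htle : t ≤ 2*r - c := Nat.find_le (Or.inl (by omega))
    have ht0 : 0 < t := by
      rcases Nat.eq_zero_or_pos t with h0 | h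
      · exfalso
        have h1 := hQt
        rw [h0] at h1
        simp only [add_zero] at h1
        rcases h1 with h1 | h1
        · omega
        · exact h1 rfl
      · exact h
    have hrun : ∀ s, s < t → c + s < 2*r ∧ p (c+s) = X := by
      intro s hs
      have h1 := Nat.find_min hQ'ex hs
      push_neg at h1
      exact ⟨by omega, h1.2⟩
    have hct : c + t ≤ 2*r := by omega
    have hQex2 : ∃ s, c + t + s = 2*r ∨ p (c+t+s) = X := ⟨2*r - (c+t), Or.inl (by omega)⟩
    set u := Nat.find hQex2 with hudef
    have hQu : c + t + u = 2*r ∨ p (c+t+u) = X := Nat.find_spec hQex2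
    have hule : u ≤ 2*r - (c+t) := Nat.find_le (Or.inl (by omega))
    have hrunu : ∀ s, s < u → c+t+s < 2*r ∧ p (c+t+s) = !X := by
      intro s hs
      have h1 := Nat.find_min hQex2 hs
      push_neg at h1
      refine ⟨by omega, ?_⟩
      cases hb : p (c+t+s)
      · cases hb2 : X
        · exfalso; rw [hb, hb2] at h1; exact h1.2 rfl
        · simp [hb2]
      · cases hb2 : X
        · simp [hb2]
        · exfalso; rw [hb, hb2] at h1; exact h1.2 rfl
    by_cases hut : t ≤ u
    · -- good case: a full block exists, recurse
      have h2t : c + 2*t ≤ 2*r := by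
        have := (hrunu (t-1) (by omega)).1; omega
      have hblock1 : ∀ j, c ≤ j → j < c + t → p j = p c := by
        intro j hj hj'
        have h1 := (hrun (j - c) (by omega)).2
        rw [show c + (j-c) = j by omega] at h1
        rw [h1]
      have hblock2 : ∀ j, c + t ≤ j → j < c + 2*t → p j = !(p c) := by
        intro j hj hj'
        have h1 := (hrunu (j - (c+t)) (by omega)).2
        rw [show c+t+(j-(c+t)) = j by omega] at h1
        rw [h1]
      have hbal2 : 2 * cnt p (c + 2*t) = c + 2*t := by
        cases hXv : X
        · have e1 : cnt p (c+t) = cnt p c :=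
            cnt_run_false p (by omega) (fun j hj hj' => by
              rw [hblock1 j hj hj', ← hX, hXv])
          have e2 : cnt p (c+2*t) = cnt p (c+t) + ((c+2*t) - (c+t)) :=
            cnt_run_true p (by omega) (fun j hj hj' => by
              rw [hblock2 j hj hj', ← hX, hXv]; rfl)
          omega
        · have e1 : cnt p (c+t) = cnt p c + ((c+t) - c) :=
            cnt_run_true p (by omega) (fun j hj hj' => by
              rw [hblock1 j hj hj', ← hX, hXv])
          have e2 : cnt p (c+2*t) = cnt p (c+t) :=
            cnt_run_false p (by omega) (fun j hj hj' => by
              rw [hblock2 j hj hj', ← hX, hXv]; rfl)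
          omega
      obtain ⟨k, cf, hc0, hck, hcb⟩ := ih (2*r - (c + 2*t)) (by omega) (c + 2*t) rfl
        (by omega) hbal2
      refine ⟨k+1, fun i => if i = 0 then c else cf (i-1), by simp, by simp [hck], ?_⟩
      intro i hi
      match i with
      | 0 =>
        refine ⟨t, ht0, by simp [hc0], ?_, ?_⟩
        · intro j hj hj'
          simp only [if_pos rfl] at hj hj' ⊢
          exact hblock1 j hj hj'
        · intro j hj hj'
          simp only [if_pos rfl] at hj hj' ⊢
          exact hblock2 j hj hj'
      | (i'+1) =>
        obtain ⟨tt, h1, h2, h3, h4⟩ := hcb i' (by omega)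
        refine ⟨tt, h1, ?_, ?_, ?_⟩
        · simpa using h2
        · intro j hj hj'
          simp only [Nat.add_sub_cancel, if_neg (Nat.succ_ne_zero _)] at hj hj' ⊢
          exact h3 j hj hj'
        · intro j hj hj'
          simp only [Nat.add_sub_cancel, if_neg (Nat.succ_ne_zero _)] at hj hj' ⊢
          exact h4 j hj hj'
    · -- bad case: u < t, derive a contradiction from the three edges
      exfalso
      push_neg at hut
      set q := c + t + u with hqdef
      set m := cnt p c with hm
      have hcnF : cnt (fun a => !p a) c = c - m := by
        have := cnt_add_not p c; omega
      cases hXv : X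
      · -- X = false : run of falses then trues
        have run1 : ∀ j, c ≤ j → j < c + t → p j = false := fun j hj hj' => by
          have h1 := (hrun (j - c) (by omega)).2
          rw [show c + (j-c) = j by omega] at h1
          rw [h1, hXv]
        have run2 : ∀ j, c + t ≤ j → j < q → p j = true := fun j hj hj' => by
          have h1 := (hrunu (j - (c+t)) (by omega)).2
          rw [show c+t+(j-(c+t)) = j by omega] at h1
          rw [h1, hXv]; rfl
        have cT_ct : cnt p (c+t) = m := cnt_run_false p (by omega) run1
        have cF_ct : cnt (fun a => !p a) (c+t) = m + t := by
          have := cnt_add_not p (c+t); omega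
        have cT_q : cnt p q = m + u := by
          have := cnt_run_true p (show c + t ≤ q by omega) run2
          omega
        have cF_q : cnt (fun a => !p a) q = m + t := by
          have := cnt_add_not p q; omega
        have hqle : q ≤ 2*r := by omega
        have hq2r : q < 2*r := by
          rcases eq_or_lt_of_le hqle with h1 | h1
          · exfalso
            rw [h1] at cT_q cF_q
            rw [hcount] at cT_q
            rw [hFcount] at cF_q
            omega
          · exact h1
        have hpq : p q = false := by
          rcases hQu with h1 | h1
          · omega
          · rw [h1, hXv]
        have hu1 : 1 ≤ u := by
          rcases Nat.eq_zero_or_pos u with h0 | h0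
          · exfalso
            rcases hQt with h1 | h1
            · omega
            · apply h1
              have : c + t = q := by omega
              rw [this, hpq, hXv]
          · exact h0
        have hmur : m + u < r := by
          have h1 : cnt p q ≤ cnt p (2*r) := cnt_mono p (by omega)
          rw [cT_q, hcount] at h1
          rcases Nat.lt_or_ge (m+u) r with h2 | h2
          · exact h2
          · exfalso; omega
        have hmtr : m + t < r := by
          have h1 : cnt (fun a => !p a) (q+1) = m + t + 1 := by
            rw [cnt_succ, cF_q, if_pos (by simp [hpq])]
          have h2 : cnt (fun a => !p a) (q+1) ≤ cnt (fun a => !p a) (2*r) :=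
            cnt_mono _ (by omega)
          rw [h1, hFcount] at h2
          omega
        obtain ⟨n, hn2r, hpn, hcn⟩ := cnt_exists p (2*r) (m+u) (by omega)
        have hqn : q < n := by
          rcases Nat.lt_trichotomy n q with h1 | h1 | h1
          · exfalso
            have h2 : cnt p (n+1) = m + u + 1 := by
              rw [cnt_succ, hcn, if_pos hpn]
            have h3 : cnt p (n+1) ≤ cnt p q := cnt_mono p (by omega)
            omega
          · exfalso; rw [h1, hpq] at hpn; exact Bool.noConfusion hpn
          · exact h1
        have hpct : p (c+t) = true := by
          rcases hQt with h1 | h1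
          · omega
          · cases hb : p (c+t)
            · exfalso; apply h1; rw [hb, hXv]
            · rfl
        have hpcu : p (c+u) = false := run1 (c+u) (by omega) (by omega)
        have hcFcu : cnt (fun a => !p a) (c+u) = m + u := by
          have h1 : cnt p (c+u) = m := cnt_run_false p (by omega)
            (fun j hj hj' => run1 j hj (by omega))
          have := cnt_add_not p (c+u); omega
        -- y (m+u) < x m
        have B1 := hxy m (m+u) (c+t) (c+u) (by omega) (by omega) hpct hpcu cT_ct hcFcu
        -- x m < z (m+t)
        have B2 := hxz m (m+t) (c+t) q (by omega) hq2r hpct hpq cT_ct cF_q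
        -- z (m+t) < y (m+u)
        have B3 := hyz (m+u) (m+t) n q hn2r hq2r hpn hpq hcn cF_q
        have hyx : y (m+u) < x m := by
          have hnot := B1.1
          have hne := B1.2
          have : ¬ (x m < y (m+u)) := fun h => by omega
          have h2 : ¬ (x m = y (m+u)) := fun h => by
            have := hne.1 h; omega
          omega
        have hxz' : x m < z (m+t) := B2.1.2 (by omega)
        have hzy : z (m+t) < y (m+u) := by
          have hnot := B3.1
          have hne := B3.2
          have : ¬ (y (m+u) < z (m+t)) := fun h => by
            have := hnot.1 h; omega
          have h2 : ¬ (y (m+u) = z (m+t)) := fun h => by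
            have := hne.1 h; omega
          omega
        omega
      · -- X = true : run of trues then falses
        have run1 : ∀ j, c ≤ j → j < c + t → p j = true := fun j hj hj' => by
          have h1 := (hrun (j - c) (by omega)).2
          rw [show c + (j-c) = j by omega] at h1
          rw [h1, hXv]
        have run2 : ∀ j, c + t ≤ j → j < q → p j = false := fun j hj hj' => by
          have h1 := (hrunu (j - (c+t)) (by omega)).2
          rw [show c+t+(j-(c+t)) = j by omega] at h1
          rw [h1, hXv]; rfl
        have cT_ct : cnt p (c+t) = m + t := by
          have := cnt_run_true p (show c ≤ c + t by omega) run1; omega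
        have cF_ct : cnt (fun a => !p a) (c+t) = m := by
          have := cnt_add_not p (c+t); omega
        have cT_q : cnt p q = m + t := by
          have := cnt_run_false p (show c + t ≤ q by omega) run2
          omega
        have cF_q : cnt (fun a => !p a) q = m + u := by
          have := cnt_add_not p q; omega
        have hqle : q ≤ 2*r := by omega
        have hq2r : q < 2*r := by
          rcases eq_or_lt_of_le hqle with h1 | h1
          · exfalso
            rw [h1] at cT_q cF_q
            rw [hcount] at cT_q
            rw [hFcount] at cF_q
            omega
          · exact h1
        have hpq : p q = true := by
          rcases hQu with h1 | h1
          · omega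
          · rw [h1, hXv]
        have hu1 : 1 ≤ u := by
          rcases Nat.eq_zero_or_pos u with h0 | h0
          · exfalso
            rcases hQt with h1 | h1
            · omega
            · apply h1
              have : c + t = q := by omega
              rw [this, hpq, hXv]
          · exact h0
        have hmur : m + u < r := by
          have h1 : cnt (fun a => !p a) q ≤ cnt (fun a => !p a) (2*r) :=
            cnt_mono _ (by omega)
          rw [cF_q, hFcount] at h1
          rcases Nat.lt_or_ge (m+u) r with h2 | h2
          · exact h2
          · exfalso; omega
        have hmtr : m + t < r := by
          have h1 : cnt p (q+1) = m + t + 1 := by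
            rw [cnt_succ, cT_q, if_pos hpq]
          have h2 : cnt p (q+1) ≤ cnt p (2*r) := cnt_mono p (by omega)
          rw [h1, hcount] at h2
          omega
        obtain ⟨n, hn2r, hpn, hcn⟩ := cnt_exists (fun a => !p a) (2*r) (m+u) (by omega)
        have hpn' : p n = false := by
          simp only [Bool.not_eq_true'] at hpn; exact hpn
        have hqn : q < n := by
          rcases Nat.lt_trichotomy n q with h1 | h1 | h1
          · exfalso
            have h2 : cnt (fun a => !p a) (n+1) = m + u + 1 := by
              rw [cnt_succ, hcn, if_pos hpn]
            have h3 : cnt (fun a => !p a) (n+1) ≤ cnt (fun a => !p a) q :=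
              cnt_mono _ (by omega)
            omega
          · exfalso; rw [h1, hpq] at hpn'; exact Bool.noConfusion hpn'
          · exact h1
        have hpct : p (c+t) = false := run2 (c+t) (by omega) (by omega)
        have hpcu : p (c+u) = true := run1 (c+u) (by omega) (by omega)
        have hcTcu : cnt p (c+u) = m + u := by
          have := cnt_run_true p (show c ≤ c + u by omega)
            (fun j hj hj' => run1 j hj (by omega))
          omega
        -- z m < x (m+t)
        have A1 := hxz (m+t) m q (c+t) hq2r (by omega) hpq hpct cT_q cF_ct
        -- x (m+t) < y (m+u)
        have A2 := hxy (m+t) (m+u) q n hq2r hn2r hpq hpn' cT_q hcn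
        -- y (m+u) < z m
        have A3 := hyz (m+u) m (c+u) (c+t) (by omega) (by omega) hpcu hpct hcTcu cF_ct
        have hzx : z m < x (m+t) := by
          have hnot := A1.1
          have hne := A1.2
          have h1 : ¬ (x (m+t) < z m) := fun h => by
            have := hnot.1 h; omega
          have h2 : ¬ (x (m+t) = z m) := fun h => by
            have := hne.1 h; omega
          omega
        have hxy' : x (m+t) < y (m+u) := A2.1.2 (by omega)
        have hyz' : y (m+u) < z m := A3.1.2 (by omega)
        omega

lemma final {r : ℕ} {p : ℕ → Bool} (hcount : cnt p (2*r) = r)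
    (hns : ¬ Splittable r p) {e1 e2 e3 : Finset ℕ}
    (h12 : FormsPattern r p e1 e2) (h13 : FormsPattern r p e1 e3)
    (h23 : FormsPattern r p e2 e3) : False := by
  apply hns
  have hFcount : cnt (fun a => !p a) (2*r) = r := by
    have := cnt_add_not p (2*r); omega
  set x : ℕ → ℕ := fun i => if h : i < r then e1.orderEmbOfFin h12.2.1 ⟨i, h⟩ else 0 with hxdef
  set y : ℕ → ℕ := fun i => if h : i < r then e2.orderEmbOfFin h12.2.2.1 ⟨i, h⟩ else 0 with hydef
  set z : ℕ → ℕ := fun i => if h : i < r then e3.orderEmbOfFin h13.2.2.1 ⟨i, h⟩ else 0 with hzdef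
  apply key r p hcount x y z
  · intro i j n₁ n₂ h₁ h₂ hq₁ hq₂ hi hj
    have hir : i < r := by
      have h3 : cnt p (n₁+1) = i + 1 := by rw [cnt_succ, hi, if_pos hq₁]
      have h4 : cnt p (n₁+1) ≤ cnt p (2*r) := cnt_mono p (by omega)
      rw [h3, hcount] at h4; omega
    have hjr : j < r := by
      have h3 : cnt (fun a => !p a) (n₂+1) = j + 1 := by
        rw [cnt_succ, hj, if_pos (by simp [hq₂])]
      have h4 : cnt (fun a => !p a) (n₂+1) ≤ cnt (fun a => !p a) (2*r) :=
        cnt_mono _ (by omega)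
      rw [h3, hFcount] at h4; omega
    have hx : x i = e1.orderEmbOfFin h12.2.1 ⟨i, hir⟩ := by rw [hxdef]; simp [hir]
    have hy : y j = e2.orderEmbOfFin h12.2.2.1 ⟨j, hjr⟩ := by rw [hydef]; simp [hjr]
    rw [hx, hy]
    exact pair h12 h₁ h₂ hq₁ hq₂ hi hj
  · intro i j n₁ n₂ h₁ h₂ hq₁ hq₂ hi hj
    have hir : i < r := by
      have h3 : cnt p (n₁+1) = i + 1 := by rw [cnt_succ, hi, if_pos hq₁]
      have h4 : cnt p (n₁+1) ≤ cnt p (2*r) := cnt_mono p (by omega)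
      rw [h3, hcount] at h4; omega
    have hjr : j < r := by
      have h3 : cnt (fun a => !p a) (n₂+1) = j + 1 := by
        rw [cnt_succ, hj, if_pos (by simp [hq₂])]
      have h4 : cnt (fun a => !p a) (n₂+1) ≤ cnt (fun a => !p a) (2*r) :=
        cnt_mono _ (by omega)
      rw [h3, hFcount] at h4; omega
    have hx : x i = e1.orderEmbOfFin h13.2.1 ⟨i, hir⟩ := by rw [hxdef]; simp [hir]
    have hz : z j = e3.orderEmbOfFin h13.2.2.1 ⟨j, hjr⟩ := by rw [hzdef]; simp [hjr]
    rw [hx, hz]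
    exact pair h13 h₁ h₂ hq₁ hq₂ hi hj
  · intro i j n₁ n₂ h₁ h₂ hq₁ hq₂ hi hj
    have hir : i < r := by
      have h3 : cnt p (n₁+1) = i + 1 := by rw [cnt_succ, hi, if_pos hq₁]
      have h4 : cnt p (n₁+1) ≤ cnt p (2*r) := cnt_mono p (by omega)
      rw [h3, hcount] at h4; omega
    have hjr : j < r := by
      have h3 : cnt (fun a => !p a) (n₂+1) = j + 1 := by
        rw [cnt_succ, hj, if_pos (by simp [hq₂])]
      have h4 : cnt (fun a => !p a) (n₂+1) ≤ cnt (fun a => !p a) (2*r) :=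
        cnt_mono _ (by omega)
      rw [h3, hFcount] at h4; omega
    have hy : y i = e2.orderEmbOfFin h23.2.1 ⟨i, hir⟩ := by rw [hydef]; simp [hir]
    have hz : z j = e3.orderEmbOfFin h23.2.2.1 ⟨j, hjr⟩ := by rw [hzdef]; simp [hjr]
    rw [hy, hz]
    exact pair h23 h₁ h₂ hq₁ hq₂ hi hj

end Stmt4Aux

/-- If an `r`-pattern `P` is not splittable then every `P`-clique has size at most 2;
in particular, no three pairwise disjoint edges can pairwise form pattern `P`. -/
theorem stmt_4 (r : ℕ) (hr : 2 ≤ r) (p : ℕ → Bool) (hp0 : p 0 = true)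
    (hcount : ((Finset.range (2 * r)).filter (fun i => p i = true)).card = r)
    (hns : ¬ Splittable r p) :
    ∀ M : Finset (Finset ℕ),
      (∀ e ∈ M, e.card = r) →
      (∀ e ∈ M, ∀ f ∈ M, e ≠ f → Disjoint e f) →
      (∀ e ∈ M, ∀ f ∈ M, e ≠ f → FormsPattern r p e f ∨ FormsPattern r p f e) →
      M.card ≤ 2 := by
  intro M hcard hdisj hforms
  by_contra hM
  push_neg at hM
  obtain ⟨a, b, c, ha, hb, hc, hab, hac, hbc⟩ := Finset.two_lt_card_iff.1 hM
  have hcount' : Stmt4Aux.cnt p (2*r) = r := hcount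
  have hne : ∀ u, u ∈ M → u.Nonempty := fun u hu =>
    Finset.card_pos.1 (by rw [hcard u hu]; omega)
  have hr0 : 0 < r := by omega
  have hmin : ∀ u v : Finset ℕ, ∀ (hu : u.Nonempty) (hv : v.Nonempty),
      FormsPattern r p u v → u.min' hu < v.min' hv :=
    fun u v hu hv hf => Stmt4Aux.min_lt hp0 hr0 hf hu hv
  rcases hforms a ha b hb hab with h1 | h1 <;>
  rcases hforms a ha c hc hac with h2 | h2 <;>
  rcases hforms b hb c hc hbc with h3 | h3
  · exact Stmt4Aux.final hcount' hns h1 h2 h3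
  · exact Stmt4Aux.final hcount' hns h2 h1 h3
  · have m1 := hmin a b (hne a ha) (hne b hb) h1
    have m2 := hmin c a (hne c hc) (hne a ha) h2
    have m3 := hmin b c (hne b hb) (hne c hc) h3
    omega
  · exact Stmt4Aux.final hcount' hns h2 h3 h1
  · exact Stmt4Aux.final hcount' hns h1 h3 h2
  · have m1 := hmin b a (hne b hb) (hne a ha) h1
    have m2 := hmin a c (hne a ha) (hne c hc) h2
    have m3 := hmin c b (hne c hc) (hne b hb) h3
    omega
  · exact Stmt4Aux.final hcount' hns h3 h1 h2
  · exact Stmt4Aux.final hcount' hns h3 h2 h1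
end

section
/- For every r ≥ 2, the total sum of maturities over all 3^{r-1} splittable r-patterns equals (3^{r-2} - 1)/2. -/
/-- Extend a word on `Fin (2*r)` to `ℕ` by `false`. -/
def extWord (r : ℕ) (p : Fin (2 * r) → Bool) : ℕ → Bool :=
  fun j => if h : j < 2 * r then p ⟨j, h⟩ else false

/-- Length of the last maximal run of a word of length `2r`: the number of positions
`j < 2r` from which onward all letters agree with the last letter. -/
def lastRunLen (r : ℕ) (w : ℕ → Bool) : ℕ :=
  ((Finset.range (2 * r)).filter
    (fun j => ∀ i, j ≤ i → i < 2 * r → w i = w (2 * r - 1))).card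

/-- The maturity of a pattern: the length of its last maximal run minus 2
(truncated at 0). -/
def maturity (r : ℕ) (w : ℕ → Bool) : ℕ := lastRunLen r w - 2

-- For every `r ≥ 2`, the total sum of maturities over all `3^(r-1)` splittable
-- `r`-patterns equals `(3^(r-2) - 1)/2`, stated multiplicatively.
/-! ### Block lists -/

/-- total letter-pair count of a block list -/
def wsum (l : List (Bool × ℕ)) : ℕ := (l.map Prod.snd).sum

/-- the word determined by a block list, padded with `false`. -/
def wordOf : List (Bool × ℕ) → ℕ → Bool
  | [], _ => false
  | (s, t) :: l, j => if j < 2 * t then (if j < t then s else !s) else wordOf l (j - 2 * t)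

def good (l : List (Bool × ℕ)) : Prop := ∀ x ∈ l, 1 ≤ x.2

/-- size of last block -/
def lastT (l : List (Bool × ℕ)) : ℕ := ((l.getLast?).map Prod.snd).getD 0

@[simp] lemma wsum_nil : wsum [] = 0 := rfl
@[simp] lemma wsum_cons (s t l) : wsum ((s, t) :: l) = t + wsum l := rfl

lemma wordOf_ge (l : List (Bool × ℕ)) (j : ℕ) (h : 2 * wsum l ≤ j) : wordOf l j = false := by
  induction l generalizing j with
  | nil => rfl
  | cons a l ih =>
    obtain ⟨s, t⟩ := a
    simp only [wsum_cons] at h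
    have h1 : ¬ j < 2 * t := by omega
    simp only [wordOf, if_neg h1]
    exact ih _ (by omega)

lemma wordOf_shift (s : Bool) (t : ℕ) (l : List (Bool × ℕ)) (j : ℕ) :
    wordOf ((s, t) :: l) (j + 2 * t) = wordOf l j := by
  have h1 : ¬ j + 2 * t < 2 * t := by omega
  simp only [wordOf, if_neg h1]
  congr 1
  omega

lemma wordOf_lo (s : Bool) (t : ℕ) (l : List (Bool × ℕ)) (j : ℕ) (h : j < t) :
    wordOf ((s, t) :: l) j = s := by
  simp only [wordOf, if_pos (by omega : j < 2 * t), if_pos h]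

lemma wordOf_hi (s : Bool) (t : ℕ) (l : List (Bool × ℕ)) (j : ℕ) (h1 : t ≤ j) (h2 : j < 2 * t) :
    wordOf ((s, t) :: l) j = !s := by
  simp only [wordOf, if_pos h2, if_neg (by omega : ¬ j < t)]

/-- collection of all good block lists of total size n (both signs free) -/
def M : ℕ → Finset (List (Bool × ℕ))
  | 0 => {[]}
  | (n+1) => (Finset.range (n+1)).attach.biUnion (fun m =>
      ((M m.1).image (fun l => (true, n+1-m.1) :: l)) ∪
      ((M m.1).image (fun l => (false, n+1-m.1) :: l)))
  decreasing_by exact Finset.mem_range.mp m.2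

lemma mem_M (n : ℕ) (l : List (Bool × ℕ)) : l ∈ M n ↔ good l ∧ wsum l = n := by
  induction n using Nat.strong_induction_on generalizing l with
  | _ n ih =>
    match n with
    | 0 =>
      simp only [M, Finset.mem_singleton]
      constructor
      · rintro rfl
        exact ⟨fun x hx => by simp at hx, rfl⟩
      · rintro ⟨hg, hw⟩
        cases l with
        | nil => rfl
        | cons a l =>
          obtain ⟨s, t⟩ := a
          have := hg (s, t) (by simp)
          simp only [wsum_cons] at hw
          omega
    | n + 1 =>
      simp only [M, Finset.mem_biUnion, Finset.mem_attach, Finset.mem_union,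
        Finset.mem_image, true_and]
      constructor
      · rintro ⟨m, (⟨a, ha, rfl⟩ | ⟨a, ha, rfl⟩)⟩ <;>
        · have hm := Finset.mem_range.mp m.2
          obtain ⟨hg, hw⟩ := (ih m.1 (by omega) a).mp ha
          refine ⟨?_, by simp [wsum_cons, hw]; omega⟩
          intro x hx
          rcases List.mem_cons.mp hx with rfl | hx
          · simp; omega
          · exact hg x hx
      · rintro ⟨hg, hw⟩
        cases l with
        | nil => simp at hw
        | cons a l =>
          obtain ⟨s, t⟩ := a
          have ht : 1 ≤ t := hg (s, t) (by simp)
          simp only [wsum_cons] at hw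
          have hgl : good l := fun x hx => hg x (List.mem_cons_of_mem _ hx)
          have hwl : wsum l ≤ n := by omega
          refine ⟨⟨wsum l, Finset.mem_range.mpr (by omega)⟩, ?_⟩
          have ha : l ∈ M (wsum l) := (ih (wsum l) (by omega) l).mpr ⟨hgl, rfl⟩
          have htt : n + 1 - wsum l = t := by omega
          cases s
          · exact Or.inr ⟨l, ha, by rw [htt]⟩
          · exact Or.inl ⟨l, ha, by rw [htt]⟩

/-- injectivity of `wordOf` on good lists -/
lemma ne_nil_aux (s : Bool) (t : ℕ) (l : List (Bool × ℕ)) (ht : 1 ≤ t)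
    (h : ∀ j, wordOf ((s, t) :: l) j = false) : False := by
  have h0 := h 0
  have h1 := h t
  rw [wordOf_lo _ _ _ _ (by omega)] at h0
  rw [wordOf_hi _ _ _ _ le_rfl (by omega)] at h1
  subst h0; simp at h1

lemma wordOf_inj (l l' : List (Bool × ℕ)) (hl : good l) (hl' : good l')
    (h : ∀ j, wordOf l j = wordOf l' j) : l = l' := by
  induction l generalizing l' with
  | nil =>
    cases l' with
    | nil => rfl
    | cons a l' =>
      obtain ⟨s, t⟩ := a
      exact absurd (ne_nil_aux s t l' (hl' (s, t) (by simp)) (fun j => (h j).symm)) (by simp)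
  | cons a l2 ih =>
    obtain ⟨s, t⟩ := a
    have ht : 1 ≤ t := hl (s, t) (by simp)
    cases l' with
    | nil => exact absurd (ne_nil_aux s t l2 ht h) (by simp)
    | cons a' l2' =>
      obtain ⟨s', t'⟩ := a'
      have ht' : 1 ≤ t' := hl' (s', t') (by simp)
      have hs : s = s' := by
        have := h 0
        rwa [wordOf_lo _ _ _ _ (by omega), wordOf_lo _ _ _ _ (by omega)] at this
      subst hs
      have htt : t = t' := by
        rcases lt_trichotomy t t' with hlt | heq | hgt
        · have := h t
          rw [wordOf_hi _ _ _ _ le_rfl (by omega), wordOf_lo _ _ _ _ hlt] at this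
          simp at this
        · exact heq
        · have := h t'
          rw [wordOf_lo _ _ _ _ hgt, wordOf_hi _ _ _ _ le_rfl (by omega)] at this
          simp at this
      subst htt
      have htail : l2 = l2' := by
        refine ih l2' (fun x hx => hl x (List.mem_cons_of_mem _ hx))
          (fun x hx => hl' x (List.mem_cons_of_mem _ hx)) (fun j => ?_)
        have := h (j + 2 * t)
        rwa [wordOf_shift, wordOf_shift] at this
      rw [htail]

/-- any good list gives a splittable word -/
lemma splittable_wordOf (l : List (Bool × ℕ)) (hl : good l) :
    Splittable (wsum l) (wordOf l) := by
  induction l with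
  | nil =>
    exact ⟨0, fun _ => 0, rfl, by simp [wsum], fun i hi => absurd hi (by omega)⟩
  | cons a l2 ih =>
    obtain ⟨s, t⟩ := a
    have ht : 1 ≤ t := hl (s, t) (by simp)
    obtain ⟨k, c, hc0, hck, hstep⟩ := ih (fun x hx => hl x (List.mem_cons_of_mem _ hx))
    refine ⟨k + 1, fun i => match i with | 0 => 0 | i + 1 => c i + 2 * t, rfl, ?_, ?_⟩
    · show c k + 2 * t = 2 * wsum ((s, t) :: l2)
      simp only [wsum_cons]; omega
    · intro i hi
      match i with
      | 0 =>
        refine ⟨t, ht, ?_, ?_, ?_⟩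
        · show c 0 + 2 * t = 0 + 2 * t
          omega
        · intro j h1 h2
          show wordOf ((s, t) :: l2) j = wordOf ((s, t) :: l2) 0
          simp only at h1 h2
          rw [wordOf_lo _ _ _ _ (by omega), wordOf_lo _ _ _ _ (by omega)]
        · intro j h1 h2
          show wordOf ((s, t) :: l2) j = !wordOf ((s, t) :: l2) 0
          simp only at h1 h2
          rw [wordOf_hi _ _ _ _ (by omega) (by omega), wordOf_lo _ _ _ _ (by omega)]
      | i + 1 =>
        obtain ⟨u, hu, hcu, hw1, hw2⟩ := hstep i (by omega)
        refine ⟨u, hu, ?_, ?_, ?_⟩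
        · show c (i + 1) + 2 * t = (c i + 2 * t) + 2 * u
          omega
        · intro j h1 h2
          show wordOf ((s, t) :: l2) j = wordOf ((s, t) :: l2) (c i + 2 * t)
          simp only at h1 h2
          have e1 : j = (j - 2 * t) + 2 * t := by omega
          rw [e1, wordOf_shift, wordOf_shift]
          exact hw1 (j - 2 * t) (by omega) (by omega)
        · intro j h1 h2
          show wordOf ((s, t) :: l2) j = !wordOf ((s, t) :: l2) (c i + 2 * t)
          simp only at h1 h2
          have e1 : j = (j - 2 * t) + 2 * t := by omega
          rw [e1, wordOf_shift, wordOf_shift]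
          exact hw2 (j - 2 * t) (by omega) (by omega)

lemma exists_list_aux (k : ℕ) : ∀ (r : ℕ) (w : ℕ → Bool) (c : ℕ → ℕ),
    c 0 = 0 → c k = 2 * r →
    (∀ i < k, ∃ t, 1 ≤ t ∧ c (i + 1) = c i + 2 * t ∧
      (∀ j, c i ≤ j → j < c i + t → w j = w (c i)) ∧
      (∀ j, c i + t ≤ j → j < c i + 2 * t → w j = !(w (c i)))) →
    (∀ j, 2 * r ≤ j → w j = false) →
    ∃ l, good l ∧ wsum l = r ∧ ∀ j, w j = wordOf l j := by
  induction k with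
  | zero =>
    intro r w c hc0 hck _ hpad
    have hr : r = 0 := by omega
    subst hr
    exact ⟨[], fun x hx => by simp at hx, rfl, fun j => hpad j (by omega)⟩
  | succ k ih =>
    intro r w c hc0 hck hstep hpad
    obtain ⟨t, ht, hc1, hw1, hw2⟩ := hstep 0 (by omega)
    simp only [Nat.zero_add] at hc1
    rw [hc0] at hc1 hw1 hw2
    -- monotonicity: c 1 ≤ c (i+1)
    have hmono : ∀ i, i ≤ k → c 1 ≤ c (i + 1) := by
      intro i hi
      induction i with
      | zero => exact le_rfl
      | succ i ih2 =>
        obtain ⟨u, hu, hcu, _, _⟩ := hstep (i + 1) (by omega)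
        have := ih2 (by omega)
        omega
    have htr : 2 * t ≤ 2 * r := by
      have := hmono k le_rfl
      omega
    have hstep' : ∀ i < k, ∃ u, 1 ≤ u ∧
        (fun i => c (i + 1) - 2 * t) (i + 1) = (fun i => c (i + 1) - 2 * t) i + 2 * u ∧
        (∀ j, (fun i => c (i + 1) - 2 * t) i ≤ j → j < (fun i => c (i + 1) - 2 * t) i + u →
          (fun j => w (j + 2 * t)) j = (fun j => w (j + 2 * t)) ((fun i => c (i + 1) - 2 * t) i)) ∧
        (∀ j, (fun i => c (i + 1) - 2 * t) i + u ≤ j → j < (fun i => c (i + 1) - 2 * t) i + 2 * u →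
          (fun j => w (j + 2 * t)) j = !((fun j => w (j + 2 * t)) ((fun i => c (i + 1) - 2 * t) i))) := by
      intro i hi
      obtain ⟨u, hu, hcu, hwa, hwb⟩ := hstep (i + 1) (by omega)
      have hcl : 2 * t ≤ c (i + 1) := by have := hmono i (by omega); omega
      refine ⟨u, hu, by simp only []; omega, ?_, ?_⟩
      · intro j h1 h2
        simp only [] at h1 h2 ⊢
        have e2 : c (i + 1) - 2 * t + 2 * t = c (i + 1) := by omega
        rw [e2]
        exact hwa (j + 2 * t) (by omega) (by omega)
      · intro j h1 h2
        simp only [] at h1 h2 ⊢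
        have e2 : c (i + 1) - 2 * t + 2 * t = c (i + 1) := by omega
        rw [e2]
        exact hwb (j + 2 * t) (by omega) (by omega)
    have hpad' : ∀ j, 2 * (r - t) ≤ j → (fun j => w (j + 2 * t)) j = false := by
      intro j hj
      exact hpad (j + 2 * t) (by omega)
    obtain ⟨l', hg', hw', heq'⟩ := ih (r - t) (fun j => w (j + 2 * t))
      (fun i => c (i + 1) - 2 * t) (by simp only [Nat.zero_add]; omega)
      (by show c (k + 1) - 2 * t = 2 * (r - t); omega) hstep' hpad'
    · refine ⟨(w 0, t) :: l', ?_, ?_, ?_⟩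
      · intro x hx
        rcases List.mem_cons.mp hx with rfl | hx
        · exact ht
        · exact hg' x hx
      · simp only [wsum_cons, hw']; omega
      · intro j
        rcases lt_or_ge j t with h | h
        · rw [wordOf_lo _ _ _ _ h]
          exact hw1 j (by omega) (by omega)
        · rcases lt_or_ge j (2 * t) with h2 | h2
          · rw [wordOf_hi _ _ _ _ h h2]
            exact hw2 j (by omega) (by omega)
          · have e1 : j = (j - 2 * t) + 2 * t := by omega
            rw [e1, wordOf_shift, ← heq' (j - 2 * t)]

lemma exists_list_of_splittable (r : ℕ) (w : ℕ → Bool) (hs : Splittable r w)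
    (hpad : ∀ j, 2 * r ≤ j → w j = false) :
    ∃ l, good l ∧ wsum l = r ∧ ∀ j, w j = wordOf l j := by
  obtain ⟨k, c, hc0, hck, hstep⟩ := hs
  exact exists_list_aux k r w c hc0 hck hstep hpad

/-- the last-run facts -/
lemma lastT_le_wsum (l : List (Bool × ℕ)) (s : Bool) (t : ℕ)
    (hlast : l.getLast? = some (s, t)) : t ≤ wsum l := by
  have hmem : (s, t) ∈ l := List.mem_of_mem_getLast? hlast
  have : t ∈ l.map Prod.snd := List.mem_map.mpr ⟨(s, t), hmem, rfl⟩
  exact List.single_le_sum (fun x _ => Nat.zero_le x) t this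

lemma lastRun_facts (l : List (Bool × ℕ)) (s : Bool) (t : ℕ) (hl : good l)
    (hlast : l.getLast? = some (s, t)) :
    (∀ j, 2 * wsum l - t ≤ j → j < 2 * wsum l → wordOf l j = !s) ∧
    wordOf l (2 * wsum l - t - 1) = s := by
  induction l with
  | nil => simp at hlast
  | cons a l2 ih =>
    obtain ⟨s0, t0⟩ := a
    have ht0 : 1 ≤ t0 := hl (s0, t0) (by simp)
    cases l2 with
    | nil =>
      simp only [List.getLast?_singleton, Option.some.injEq, Prod.mk.injEq] at hlast
      obtain ⟨rfl, rfl⟩ := hlast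
      simp only [wsum_cons, wsum_nil, Nat.add_zero]
      constructor
      · intro j h1 h2
        exact wordOf_hi _ _ _ _ (by omega) (by omega)
      · exact wordOf_lo _ _ _ _ (by omega)
    | cons b l3 =>
      have hlast2 : (b :: l3).getLast? = some (s, t) := by
        rwa [List.getLast?_cons_cons] at hlast
      have hg2 : good (b :: l3) := fun x hx => hl x (List.mem_cons_of_mem _ hx)
      obtain ⟨iha, ihb⟩ := ih hg2 hlast2
      have htW : t ≤ wsum (b :: l3) := lastT_le_wsum _ _ _ hlast2
      have hW1 : 1 ≤ wsum (b :: l3) := by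
        have := hg2 b (by simp)
        obtain ⟨sb, tb⟩ := b
        simp only [wsum_cons]
        simp at this
        omega
      simp only [wsum_cons]
      constructor
      · intro j h1 h2
        have e1 : j = (j - 2 * t0) + 2 * t0 := by omega
        rw [e1, wordOf_shift]
        exact iha _ (by omega) (by omega)
      · have e1 : 2 * (t0 + wsum (b :: l3)) - t - 1
            = (2 * wsum (b :: l3) - t - 1) + 2 * t0 := by omega
        rw [e1, wordOf_shift]
        exact ihb

lemma lastRunLen_wordOf (l : List (Bool × ℕ)) (hl : good l) (hne : l ≠ []) :
    lastRunLen (wsum l) (wordOf l) = lastT l := by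
  obtain ⟨x, hlast⟩ := List.getLast?_isSome.mpr hne |> Option.isSome_iff_exists.mp
  obtain ⟨s, t⟩ := x
  have ht : 1 ≤ t := hl (s, t) (List.mem_of_mem_getLast? hlast)
  have htW : t ≤ wsum l := lastT_le_wsum _ _ _ hlast
  obtain ⟨ha, hb⟩ := lastRun_facts l s t hl hlast
  have hlT : lastT l = t := by simp [lastT, hlast]
  have hWlast : wordOf l (2 * wsum l - 1) = !s := ha _ (by omega) (by omega)
  rw [hlT]
  unfold lastRunLen
  have hset : (Finset.range (2 * wsum l)).filter
      (fun j => ∀ i, j ≤ i → i < 2 * wsum l → wordOf l i = wordOf l (2 * wsum l - 1))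
      = Finset.Ico (2 * wsum l - t) (2 * wsum l) := by
    ext j
    simp only [Finset.mem_filter, Finset.mem_range, Finset.mem_Ico]
    constructor
    · rintro ⟨hj, hall⟩
      refine ⟨?_, hj⟩
      by_contra hcon
      have hlt : j < 2 * wsum l - t := by omega
      have := hall (2 * wsum l - t - 1) (by omega) (by omega)
      rw [hb, hWlast] at this
      simp at this
    · rintro ⟨h1, h2⟩
      refine ⟨h2, fun i hi1 hi2 => ?_⟩
      rw [ha i (by omega) hi2, hWlast]
  rw [hset, Nat.card_Ico]
  omega

/-- the head-sign-true sublists -/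
noncomputable def P (n : ℕ) : Finset (List (Bool × ℕ)) :=
  (M n).filter (fun l => l.head?.map Prod.fst = some true)

noncomputable def A (n : ℕ) : ℕ := ∑ l ∈ M n, (lastT l - 2)

lemma M_ne_nil (n : ℕ) (hn : 1 ≤ n) (l : List (Bool × ℕ)) (hl : l ∈ M n) : l ≠ [] := by
  obtain ⟨hg, hw⟩ := (mem_M n l).mp hl
  rintro rfl
  simp [wsum] at hw
  omega

lemma lastT_cons_ne (a : Bool × ℕ) (l : List (Bool × ℕ)) (h : l ≠ []) :
    lastT (a :: l) = lastT l := by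
  cases l with
  | nil => exact absurd rfl h
  | cons b l => simp [lastT, List.getLast?_cons_cons]

lemma lastT_single (s : Bool) (t : ℕ) : lastT [(s, t)] = t := by
  simp [lastT]

lemma A_rec (n : ℕ) : A (n + 1) = 2 * (n + 1 - 2) + 2 * ∑ i ∈ Finset.range n, A (i + 1) := by
  have hM : M (n + 1) = (Finset.range (n+1)).attach.biUnion (fun m =>
      ((M m.1).image (fun l => (true, n+1-m.1) :: l)) ∪
      ((M m.1).image (fun l => (false, n+1-m.1) :: l))) := by
    rw [M]
  have hhead : ∀ (x : {m // m ∈ Finset.range (n+1)}) (l : List (Bool × ℕ)),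
      l ∈ ((M x.1).image (fun l => (true, n+1-x.1) :: l)) ∪
        ((M x.1).image (fun l => (false, n+1-x.1) :: l)) →
      ∃ s tl, tl ∈ M x.1 ∧ l = (s, n+1-x.1) :: tl := by
    intro x l hl
    rcases Finset.mem_union.mp hl with h | h <;> obtain ⟨a, ha, rfl⟩ := Finset.mem_image.mp h
    exacts [⟨true, a, ha, rfl⟩, ⟨false, a, ha, rfl⟩]
  have hdisj : (↑(Finset.range (n+1)).attach : Set {m // m ∈ Finset.range (n+1)}).PairwiseDisjoint
      (fun m : {m // m ∈ Finset.range (n+1)} =>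
      ((M m.1).image (fun l => (true, n+1-m.1) :: l)) ∪
      ((M m.1).image (fun l => (false, n+1-m.1) :: l))) := by
    intro x _ y _ hxy
    simp only [Function.onFun]
    rw [Finset.disjoint_left]
    intro l hlx hly
    obtain ⟨s, tl, _, rfl⟩ := hhead x l hlx
    obtain ⟨s', tl', _, heq⟩ := hhead y _ hly
    have hx := Finset.mem_range.mp x.2
    have hy := Finset.mem_range.mp y.2
    simp only [List.cons.injEq, Prod.mk.injEq] at heq
    exact hxy (Subtype.ext (by omega))
  have hsum1 : ∀ (s : Bool) (u : ℕ) (m : ℕ), 1 ≤ u →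
      ∑ l ∈ (M m).image (fun l => (s, u) :: l), (lastT l - 2)
        = if m = 0 then u - 2 else A m := by
    intro s u m hu
    rw [Finset.sum_image (by
      intro a _ b _ hab
      simpa using hab)]
    by_cases hm : m = 0
    · subst hm
      rw [if_pos rfl]
      have : M 0 = {[]} := by rw [M]
      rw [this, Finset.sum_singleton, lastT_single]
    · rw [if_neg hm, A]
      refine Finset.sum_congr rfl (fun l hl => ?_)
      rw [lastT_cons_ne _ _ (M_ne_nil m (by omega) l hl)]
  rw [A, hM, Finset.sum_biUnion hdisj]
  have hterm : ∀ x : {m // m ∈ Finset.range (n+1)},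
      ∑ l ∈ ((M x.1).image (fun l => (true, n+1-x.1) :: l)) ∪
        ((M x.1).image (fun l => (false, n+1-x.1) :: l)), (lastT l - 2)
      = 2 * (if x.1 = 0 then n + 1 - 2 else A x.1) := by
    intro x
    have hx := Finset.mem_range.mp x.2
    have hu : 1 ≤ n + 1 - x.1 := by omega
    rw [Finset.sum_union (by
      rw [Finset.disjoint_left]
      intro l h1 h2
      obtain ⟨a, _, rfl⟩ := Finset.mem_image.mp h1
      obtain ⟨b, _, heq⟩ := Finset.mem_image.mp h2
      simp at heq)]
    rw [hsum1 true _ _ hu, hsum1 false _ _ hu]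
    have : n + 1 - x.1 - 2 = if x.1 = 0 then n + 1 - 2 else n + 1 - x.1 - 2 := by
      split <;> omega
    by_cases hx0 : x.1 = 0
    · simp [hx0]; ring
    · simp [hx0]; ring
  rw [Finset.sum_congr rfl (fun x _ => hterm x)]
  rw [Finset.sum_attach (Finset.range (n+1)) (fun m => 2 * (if m = 0 then n + 1 - 2 else A m))]
  rw [Finset.sum_range_succ']
  simp only [Nat.add_eq_zero, Nat.add_one_ne_zero, false_and, if_false, if_true, if_neg
    (Nat.succ_ne_zero _), reduceIte]
  rw [Finset.mul_sum]
  ring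

lemma A_eq (k : ℕ) : A (k + 2) = 3 ^ k - 1 := by
  induction k with
  | zero =>
    have h2 := A_rec 1
    have h1 := A_rec 0
    norm_num [Finset.sum_range_succ] at h2 h1
    show A 2 = 3 ^ 0 - 1
    rw [h2, h1]
    rfl
  | succ k ih =>
    have h3 := A_rec (k + 2)
    have h2 := A_rec (k + 1)
    rw [Finset.sum_range_succ] at h3
    have hp : (3:ℕ) ^ (k + 1) = 3 * 3 ^ k := by ring
    have hge : 1 ≤ (3:ℕ) ^ k := Nat.one_le_pow _ _ (by norm_num)
    have e2 : k + 1 + 1 - 2 = k := by omega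
    have e3 : k + 2 + 1 - 2 = k + 1 := by omega
    have e4 : k + 2 + 1 = k + 3 := by omega
    have e5 : k + 1 + 1 = k + 2 := by omega
    have e6 : k + 1 + 2 = k + 3 := by omega
    rw [e3, e4, e5] at h3
    rw [e2, e5] at h2
    rw [e6]
    omega

def flipHead : List (Bool × ℕ) → List (Bool × ℕ)
  | [] => []
  | (s, t) :: l => (!s, t) :: l

lemma flipHead_flipHead (l : List (Bool × ℕ)) : flipHead (flipHead l) = l := by
  cases l with
  | nil => rfl
  | cons a l => obtain ⟨s, t⟩ := a; simp [flipHead]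

lemma flipHead_mem_M (n : ℕ) (l : List (Bool × ℕ)) (hl : l ∈ M n) : flipHead l ∈ M n := by
  rw [mem_M] at hl ⊢
  obtain ⟨hg, hw⟩ := hl
  cases l with
  | nil => exact ⟨hg, hw⟩
  | cons a l =>
    obtain ⟨s, t⟩ := a
    refine ⟨?_, by simpa [flipHead] using hw⟩
    intro x hx
    simp only [flipHead, List.mem_cons] at hx
    rcases hx with rfl | hx
    · exact hg (s, t) (by simp)
    · exact hg x (List.mem_cons_of_mem _ hx)

lemma flipHead_lastT (l : List (Bool × ℕ)) : lastT (flipHead l) = lastT l := by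
  cases l with
  | nil => rfl
  | cons a l =>
    obtain ⟨s, t⟩ := a
    cases l with
    | nil => simp [flipHead, lastT]
    | cons b l => simp [flipHead, lastT, List.getLast?_cons_cons]

lemma sum_P (n : ℕ) (hn : 1 ≤ n) : 2 * ∑ l ∈ P n, (lastT l - 2) = A n := by
  have hsplit := Finset.sum_filter_add_sum_filter_not (M n)
    (fun l => l.head?.map Prod.fst = some true) (fun l => lastT l - 2)
  have hswap : ∑ l ∈ (M n).filter (fun l => ¬ l.head?.map Prod.fst = some true),
      (lastT l - 2) = ∑ l ∈ (M n).filter (fun l => l.head?.map Prod.fst = some true),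
      (lastT l - 2) := by
    refine Finset.sum_nbij' (fun l => flipHead l) (fun l => flipHead l) ?_ ?_ ?_ ?_ ?_
    · intro l hl
      obtain ⟨hlM, hlh⟩ := Finset.mem_filter.mp hl
      refine Finset.mem_filter.mpr ⟨flipHead_mem_M n l hlM, ?_⟩
      cases l with
      | nil => exact absurd hlM (fun h => M_ne_nil n hn [] h rfl)
      | cons a l =>
        obtain ⟨s, t⟩ := a
        cases s
        · simp [flipHead]
        · simp at hlh
    · intro l hl
      obtain ⟨hlM, hlh⟩ := Finset.mem_filter.mp hl
      refine Finset.mem_filter.mpr ⟨flipHead_mem_M n l hlM, ?_⟩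
      cases l with
      | nil => exact absurd hlM (fun h => M_ne_nil n hn [] h rfl)
      | cons a l =>
        obtain ⟨s, t⟩ := a
        cases s
        · simp at hlh
        · simp [flipHead]
    · intro l _; exact flipHead_flipHead l
    · intro l _; exact flipHead_flipHead l
    · intro l _; rw [flipHead_lastT]
  have hA : A n = ∑ l ∈ M n, (lastT l - 2) := rfl
  have hP : ∑ l ∈ P n, (lastT l - 2)
      = ∑ l ∈ (M n).filter (fun l => l.head?.map Prod.fst = some true), (lastT l - 2) := rfl
  omega

open Classical in
theorem stmt_7 (r : ℕ) (hr : 2 ≤ r) :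
    2 * ∑ p : Fin (2 * r) → Bool,
        (if extWord r p 0 = true ∧ Splittable r (extWord r p)
          then maturity r (extWord r p) else 0)
      = 3 ^ (r - 2) - 1 := by
  classical
  have hr1 : 1 ≤ r := by omega
  have hext : ∀ l ∈ P r, extWord r (fun j : Fin (2 * r) => wordOf l ↑j) = wordOf l := by
    intro l hl
    obtain ⟨hg, hw⟩ := (mem_M r l).mp (Finset.mem_filter.mp hl).1
    funext j
    unfold extWord
    by_cases h : j < 2 * r
    · rw [dif_pos h]
    · rw [dif_neg h]
      exact (wordOf_ge l j (by omega)).symm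
  have hfilter : (Finset.univ.filter (fun p : Fin (2 * r) → Bool =>
        extWord r p 0 = true ∧ Splittable r (extWord r p)))
      = (P r).image (fun l => fun j : Fin (2 * r) => wordOf l ↑j) := by
    ext p
    simp only [Finset.mem_filter, Finset.mem_univ, true_and, Finset.mem_image]
    constructor
    · rintro ⟨h0, hs⟩
      obtain ⟨l, hg, hw, heq⟩ := exists_list_of_splittable r (extWord r p) hs
        (fun j hj => by unfold extWord; rw [dif_neg (by omega)])
      have hlM : l ∈ M r := (mem_M r l).mpr ⟨hg, hw⟩
      have hne : l ≠ [] := M_ne_nil r hr1 l hlM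
      refine ⟨l, ?_, ?_⟩
      · refine Finset.mem_filter.mpr ⟨hlM, ?_⟩
        cases l with
        | nil => exact absurd rfl hne
        | cons a l2 =>
          obtain ⟨s, t⟩ := a
          have ht : 1 ≤ t := hg (s, t) (by simp)
          have : extWord r p 0 = s := by rw [heq 0, wordOf_lo _ _ _ _ (by omega)]
          rw [h0] at this
          simp [← this]
      · funext j
        have : extWord r p ↑j = p j := by
          unfold extWord
          rw [dif_pos j.2]
        rw [← this, heq ↑j]
    · rintro ⟨l, hl, rfl⟩
      have hWl := hext l hl
      obtain ⟨hg, hw⟩ := (mem_M r l).mp (Finset.mem_filter.mp hl).1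
      have hhd := (Finset.mem_filter.mp hl).2
      have hne : l ≠ [] := M_ne_nil r hr1 l (Finset.mem_filter.mp hl).1
      constructor
      · rw [hWl]
        cases l with
        | nil => exact absurd rfl hne
        | cons a l2 =>
          obtain ⟨s, t⟩ := a
          have ht : 1 ≤ t := hg (s, t) (by simp)
          simp only [List.head?_cons, Option.map_some] at hhd
          have hs : s = true := by simpa using hhd
          rw [wordOf_lo _ _ _ _ (by omega), hs]
      · rw [hWl, ← hw]
        exact splittable_wordOf l hg
  have hinj : ∀ l ∈ P r, ∀ l' ∈ P r,
      (fun j : Fin (2 * r) => wordOf l ↑j) = (fun j : Fin (2 * r) => wordOf l' ↑j) → l = l' := by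
    intro l hl l' hl' heq
    obtain ⟨hg, hw⟩ := (mem_M r l).mp (Finset.mem_filter.mp hl).1
    obtain ⟨hg', hw'⟩ := (mem_M r l').mp (Finset.mem_filter.mp hl').1
    refine wordOf_inj l l' hg hg' (fun j => ?_)
    rcases lt_or_ge j (2 * r) with h | h
    · exact congrFun heq ⟨j, h⟩
    · rw [wordOf_ge l j (by omega), wordOf_ge l' j (by omega)]
  have hmain : ∑ p : Fin (2 * r) → Bool,
      (if extWord r p 0 = true ∧ Splittable r (extWord r p)
        then maturity r (extWord r p) else 0)
      = ∑ l ∈ P r, (lastT l - 2) := by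
    rw [← Finset.sum_filter, hfilter, Finset.sum_image hinj]
    refine Finset.sum_congr rfl (fun l hl => ?_)
    obtain ⟨hg, hw⟩ := (mem_M r l).mp (Finset.mem_filter.mp hl).1
    have hne : l ≠ [] := M_ne_nil r hr1 l (Finset.mem_filter.mp hl).1
    rw [hext l hl]
    unfold maturity
    rw [← hw, lastRunLen_wordOf l hg hne]
  rw [hmain, sum_P r hr1]
  have : r - 2 + 2 = r := by omega
  rw [← this, A_eq]
  congr 2
end

section
/- For every r ≥ 2 and integer 1 ≤ t ≤ r-1, the number of splittable r-patterns whose unique block decomposition ends in the block A^t B^t, plus the number ending in B^t A^t, equals 2 · 3^{r-t-1}; and there is exactly one splittable r-pattern (namely A^r B^r) whose decomposition consists of the single block of size 2r. -/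
/-- lastRunLen computation -/
lemma lastRun_eq (r t : ℕ) (w : ℕ → Bool) (hr : 1 ≤ r) (ht : 1 ≤ t) (htr : t ≤ r)
    (hlast : ∀ j, 2 * r - t ≤ j → j < 2 * r → w j = w (2 * r - 1))
    (hprev : w (2 * r - t - 1) = !(w (2 * r - 1))) :
    lastRunLen r w = t := by
  have hset : (Finset.range (2 * r)).filter
      (fun j => ∀ i, j ≤ i → i < 2 * r → w i = w (2 * r - 1)) =
      Finset.Ico (2 * r - t) (2 * r) := by
    ext j
    simp only [Finset.mem_filter, Finset.mem_range, Finset.mem_Ico]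
    constructor
    · rintro ⟨hj, hall⟩
      refine ⟨?_, hj⟩
      by_contra hlt
      push_neg at hlt
      have := hall (2 * r - t - 1) (by omega) (by omega)
      rw [hprev] at this
      simp at this
    · rintro ⟨h1, h2⟩
      exact ⟨h2, fun i hi1 hi2 => hlast i (by omega) hi2⟩
  rw [lastRunLen, hset, Nat.card_Ico]
  omega

lemma Splittable.c_mono {r : ℕ} {w : ℕ → Bool} {k : ℕ} {c : ℕ → ℕ}
    (hstep : ∀ i < k, ∃ t, 1 ≤ t ∧ c (i + 1) = c i + 2 * t ∧
      (∀ j, c i ≤ j → j < c i + t → w j = w (c i)) ∧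
      (∀ j, c i + t ≤ j → j < c i + 2 * t → w j = !(w (c i)))) :
    ∀ d i, i + d ≤ k → c i + 2 * d ≤ c (i + d) := by
  intro d
  induction d with
  | zero => intro i _; simp
  | succ n ih =>
    intro i hik
    have h1 := ih i (by omega)
    obtain ⟨t, ht1, ht2, -, -⟩ := hstep (i + n) (by omega)
    have : i + (n + 1) = (i + n) + 1 := by omega
    rw [this, ht2]
    omega

lemma Splittable.congr {r : ℕ} {w w' : ℕ → Bool}
    (h : ∀ j < 2 * r, w j = w' j) (hs : Splittable r w) : Splittable r w' := by
  obtain ⟨k, c, hc0, hck, hstep⟩ := hs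
  refine ⟨k, c, hc0, hck, fun i hik => ?_⟩
  obtain ⟨t, ht1, ht2, hA, hB⟩ := hstep i hik
  have hub : c (i + 1) ≤ 2 * r := by
    have h2 := Splittable.c_mono (r := r) (w := w) hstep (k - (i+1)) (i+1) (by omega)
    rw [show i + 1 + (k - (i + 1)) = k from by omega, hck] at h2
    omega
  have hci : c i < 2 * r := by omega
  refine ⟨t, ht1, ht2, fun j hj1 hj2 => ?_, fun j hj1 hj2 => ?_⟩
  · rw [← h j (by omega), ← h (c i) hci]; exact hA j hj1 hj2
  · rw [← h j (by omega), ← h (c i) hci]; exact hB j hj1 hj2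

/-- Appending a block X^t (!X)^t to a splittable word of length 2m. -/
lemma Splittable.append {m t : ℕ} {w : ℕ → Bool} (ht : 1 ≤ t)
    (hs : Splittable m w) (X : Bool)
    (h1 : ∀ j, 2 * m ≤ j → j < 2 * m + t → w j = X)
    (h2 : ∀ j, 2 * m + t ≤ j → j < 2 * m + 2 * t → w j = !X) :
    Splittable (m + t) w := by
  obtain ⟨kk, c, hc0, hck, hstep⟩ := hs
  set c' : ℕ → ℕ := fun i => if i ≤ kk then c i else 2 * m + 2 * t with hc'
  have hc'le : ∀ i, i ≤ kk → c' i = c i := fun i hi => if_pos hi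
  have hc'k : c' kk = 2 * m := by rw [hc'le kk (le_refl _), hck]
  have hc'k1 : c' (kk + 1) = 2 * m + 2 * t := if_neg (by omega)
  refine ⟨kk + 1, c', by rw [hc'le 0 (by omega), hc0], by rw [hc'k1]; ring, ?_⟩
  intro i hik
  by_cases hi : i < kk
  · obtain ⟨s, hs1, hs2, hA, hB⟩ := hstep i hi
    rw [hc'le i (by omega), hc'le (i + 1) (by omega)]
    exact ⟨s, hs1, hs2, hA, hB⟩
  · have hik' : i = kk := by omega
    subst hik'
    rw [hc'k1, hc'k]
    have hwX : w (2 * m) = X := h1 (2 * m) (le_refl _) (by omega)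
    rw [hwX]
    refine ⟨t, ht, by ring, fun j hj1 hj2 => h1 j hj1 hj2,
      fun j hj1 hj2 => h2 j hj1 (by omega)⟩

/-- Key structure lemma: extract the last block. -/
lemma keyA {r : ℕ} {w : ℕ → Bool} (hr : 1 ≤ r) (h0 : w 0 = true)
    (hs : Splittable r w) :
    ∃ t, 1 ≤ t ∧ t ≤ r ∧
      (∀ j, 2 * r - 2 * t ≤ j → j < 2 * r - t → w j = !(w (2 * r - 1))) ∧
      (∀ j, 2 * r - t ≤ j → j < 2 * r → w j = w (2 * r - 1)) ∧
      lastRunLen r w = t ∧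
      (t < r → Splittable (r - t) w) ∧
      (t = r → w (2 * r - 1) = false) := by
  obtain ⟨k, c, hc0, hck, hstep⟩ := hs
  have hk1 : 1 ≤ k := by
    rcases Nat.eq_zero_or_pos k with h | h
    · subst h; omega
    · exact h
  obtain ⟨t, ht1, ht2, hA, hB⟩ := hstep (k - 1) (by omega)
  rw [show k - 1 + 1 = k by omega, hck] at ht2
  have hct : c (k - 1) = 2 * r - 2 * t := by omega
  have htr : t ≤ r := by omega
  have hlastval : w (2 * r - 1) = !(w (c (k - 1))) := by
    exact hB (2 * r - 1) (by omega) (by omega)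
  have hX : w (c (k - 1)) = !(w (2 * r - 1)) := by
    rw [hlastval, Bool.not_not]
  refine ⟨t, ht1, htr, ?_, ?_, ?_, ?_, ?_⟩
  · intro j hj1 hj2
    rw [← hX]
    exact hA j (by omega) (by omega)
  · intro j hj1 hj2
    rw [hlastval]
    exact hB j (by omega) (by omega)
  · refine lastRun_eq r t w hr ht1 htr ?_ ?_
    · intro j hj1 hj2
      rw [hlastval]
      exact hB j (by omega) (by omega)
    · rw [← hX]
      exact hA (2 * r - t - 1) (by omega) (by omega)
  · intro htlt
    refine ⟨k - 1, c, hc0, by omega, fun i hik => hstep i (by omega)⟩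
  · intro hteq
    subst hteq
    have : c (k - 1) = 0 := by omega
    rw [hlastval, this, h0]
    rfl

def restr (m t : ℕ) (p : Fin (2 * m) → Bool) : Fin (2 * (m - t)) → Bool :=
  fun j => p ⟨j, lt_of_lt_of_le j.2 (Nat.mul_le_mul_left 2 (Nat.sub_le m t))⟩

def glue (m t : ℕ) (b : Bool) (q : Fin (2 * (m - t)) → Bool) : Fin (2 * m) → Bool :=
  fun j => if h : (j : ℕ) < 2 * (m - t) then q ⟨j, h⟩
    else if (j : ℕ) < 2 * m - t then !b else b

lemma ext_eval {m : ℕ} (p : Fin (2 * m) → Bool) (j : ℕ) (hj : j < 2 * m) :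
    extWord m p j = p ⟨j, hj⟩ := by simp [extWord, hj]

lemma ext_restr {m t : ℕ} (p : Fin (2 * m) → Bool) (j : ℕ) (hj : j < 2 * (m - t)) :
    extWord (m - t) (restr m t p) j = extWord m p j := by
  have hj2 : j < 2 * m := by omega
  rw [ext_eval _ j hj, ext_eval _ j hj2, restr]

lemma card_S (m t : ℕ) (ht : 1 ≤ t) (htm : t < m) (b : Bool) :
    Nat.card {p : Fin (2 * m) → Bool //
        extWord m p 0 = true ∧ Splittable m (extWord m p) ∧
        lastRunLen m (extWord m p) = t ∧ extWord m p (2 * m - 1) = b} =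
    Nat.card {q : Fin (2 * (m - t)) → Bool //
        extWord (m - t) q 0 = true ∧ Splittable (m - t) (extWord (m - t) q)} := by
  apply Nat.card_congr
  refine
    { toFun := fun pe => ⟨restr m t pe.1, ?_, ?_⟩
      invFun := fun qe => ⟨glue m t b qe.1, ?_, ?_, ?_, ?_⟩
      left_inv := ?_
      right_inv := ?_ }
  · -- start
    rw [ext_restr pe.1 0 (by omega)]
    exact pe.2.1
  · -- splittable of restriction
    obtain ⟨p, h0, hsp, hlr, hb⟩ := pe
    obtain ⟨t', h1', h2', hA, hB, hlr', hpre, hsing⟩ := keyA (by omega : 1 ≤ m) h0 hsp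
    have htt : t = t' := by omega
    subst htt
    exact Splittable.congr (fun j hj => (ext_restr p j hj).symm) (hpre htm)
  · -- start of glue
    have h0 : (0 : ℕ) < 2 * (m - t) := by omega
    have : extWord m (glue m t b qe.1) 0 = qe.1 ⟨0, h0⟩ := by
      rw [ext_eval _ 0 (by omega)]
      simp [glue, h0]
    rw [this, ← ext_eval qe.1 0 h0]
    exact qe.2.1
  · -- splittable of glue
    have hagree : ∀ j < 2 * (m - t), extWord (m - t) qe.1 j = extWord m (glue m t b qe.1) j := by
      intro j hj
      rw [ext_eval _ j hj, ext_eval _ j (by omega : j < 2 * m)]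
      simp [glue, hj]
    have hs1 : Splittable (m - t) (extWord m (glue m t b qe.1)) :=
      Splittable.congr hagree qe.2.2
    have hres := Splittable.append (m := m - t) (t := t) ht hs1 (!b) ?_ ?_
    · rwa [show m - t + t = m from by omega] at hres
    · intro j hj1 hj2
      rw [ext_eval _ j (by omega : j < 2 * m)]
      simp only [glue]
      rw [dif_neg (by omega), if_pos (by omega)]
    · intro j hj1 hj2
      rw [ext_eval _ j (by omega : j < 2 * m)]
      simp only [glue]
      rw [dif_neg (by omega), if_neg (by omega)]
      simp
  · -- lastRunLen of glue
    have hev : ∀ j, 2 * m - t ≤ j → j < 2 * m → extWord m (glue m t b qe.1) j = b := by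
      intro j hj1 hj2
      rw [ext_eval _ j hj2]
      simp only [glue]
      rw [dif_neg (by omega), if_neg (by omega)]
    refine lastRun_eq m t _ (by omega) ht (by omega) ?_ ?_
    · intro j hj1 hj2
      rw [hev j hj1 hj2, hev (2 * m - 1) (by omega) (by omega)]
    · rw [hev (2 * m - 1) (by omega) (by omega)]
      rw [ext_eval _ (2 * m - t - 1) (by omega)]
      simp only [glue]
      rw [dif_neg (by omega), if_pos (by omega)]
  · -- last letter of glue
    rw [ext_eval _ (2 * m - 1) (by omega)]
    simp only [glue]
    rw [dif_neg (by omega), if_neg (by omega)]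
  · -- left inverse : invFun (toFun pe) = pe
    rintro ⟨p, h0, hsp, hlr, hb⟩
    apply Subtype.ext
    funext j
    obtain ⟨t', h1', h2', hA, hB, hlr', hpre, hsing⟩ := keyA (by omega : 1 ≤ m) h0 hsp
    have htt : t = t' := by omega
    subst htt
    have hj2 := j.2
    show glue m t b (restr m t p) j = p j
    by_cases hc1 : (j : ℕ) < 2 * (m - t)
    · simp only [glue]
      rw [dif_pos hc1]
      rfl
    · by_cases hc2 : (j : ℕ) < 2 * m - t
      · have hz := hA (j : ℕ) (by omega) (by omega)
        rw [ext_eval _ _ hj2, hb] at hz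
        simp only [glue]
        rw [dif_neg hc1, if_pos hc2, ← hz]
      · have hz := hB (j : ℕ) (by omega) (by omega)
        rw [ext_eval _ _ hj2, hb] at hz
        simp only [glue]
        rw [dif_neg hc1, if_neg hc2, ← hz]
  · -- right inverse : toFun (invFun qe) = qe
    rintro ⟨q, hq0, hqs⟩
    apply Subtype.ext
    funext j
    have hj := j.2
    show restr m t (glue m t b q) j = q j
    simp only [restr, glue]
    rw [dif_pos (show ((j : ℕ)) < 2 * (m - t) from hj)]

lemma singleton_word (m : ℕ) (hm : 1 ≤ m) (p : Fin (2 * m) → Bool)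
    (h0 : extWord m p 0 = true) (hsp : Splittable m (extWord m p))
    (hlr : lastRunLen m (extWord m p) = m) :
    ∀ j : Fin (2 * m), p j = decide ((j : ℕ) < m) := by
  intro j
  obtain ⟨t', h1', h2', hA, hB, hlr', hpre, hsing⟩ := keyA (by omega : 1 ≤ m) h0 hsp
  have htt : m = t' := by omega
  subst htt
  have hend := hsing rfl
  have hj2 := j.2
  by_cases hj : (j : ℕ) < m
  · have hz := hA (j : ℕ) (by omega) (by omega)
    rw [ext_eval _ _ hj2, hend] at hz
    have hz' : p j = !false := hz
    simp [hz', hj]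
  · have hz := hB (j : ℕ) (by omega) (by omega)
    rw [ext_eval _ _ hj2, hend] at hz
    have hz' : p j = false := hz
    simp [hz', hj]

lemma lastRun_m_end (m : ℕ) (hm : 1 ≤ m) (p : Fin (2 * m) → Bool)
    (h0 : extWord m p 0 = true) (hsp : Splittable m (extWord m p))
    (hlr : lastRunLen m (extWord m p) = m) :
    extWord m p (2 * m - 1) = false := by
  obtain ⟨t', h1', h2', hA, hB, hlr', hpre, hsing⟩ := keyA (by omega : 1 ≤ m) h0 hsp
  have htt : m = t' := by omega
  subst htt
  exact hsing rfl

lemma model_word (m : ℕ) (hm : 1 ≤ m) :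
    extWord m (fun j : Fin (2 * m) => decide ((j : ℕ) < m)) 0 = true ∧
    Splittable m (extWord m (fun j : Fin (2 * m) => decide ((j : ℕ) < m))) ∧
    lastRunLen m (extWord m (fun j : Fin (2 * m) => decide ((j : ℕ) < m))) = m := by
  set p0 : Fin (2 * m) → Bool := fun j => decide ((j : ℕ) < m) with hp0
  have hev : ∀ j, j < 2 * m → extWord m p0 j = decide (j < m) := by
    intro j hj
    rw [ext_eval _ j hj]
  have h0 : extWord m p0 0 = true := by
    rw [hev 0 (by omega)]
    simp only [decide_eq_true_eq]
    omega
  refine ⟨h0, ?_, ?_⟩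
  · refine ⟨1, fun i => if i = 0 then 0 else 2 * m, rfl, rfl, ?_⟩
    intro i hi
    have hi0 : i = 0 := by omega
    subst hi0
    show ∃ t, 1 ≤ t ∧ 2 * m = 0 + 2 * t ∧
      (∀ j, 0 ≤ j → j < 0 + t → extWord m p0 j = extWord m p0 0) ∧
      (∀ j, 0 + t ≤ j → j < 0 + 2 * t → extWord m p0 j = !extWord m p0 0)
    refine ⟨m, hm, by omega, ?_, ?_⟩
    · intro j hj1 hj2
      rw [hev j (by omega), h0]
      simp only [decide_eq_true_eq]
      omega
    · intro j hj1 hj2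
      rw [hev j (by omega), h0]
      simp only [Bool.not_true, decide_eq_false_iff_not]
      omega
  · refine lastRun_eq m m _ hm hm (le_refl m) ?_ ?_
    · intro j hj1 hj2
      rw [hev j hj2, hev (2 * m - 1) (by omega)]
      simp only [decide_eq_decide]
      omega
    · rw [hev (2 * m - m - 1) (by omega), hev (2 * m - 1) (by omega)]
      have e1 : 2 * m - m - 1 < m := by omega
      have e2 : ¬ (2 * m - 1 < m) := by omega
      simp [e1, e2]

lemma card_lastRun_full (m : ℕ) (hm : 1 ≤ m) :
    Nat.card {p : Fin (2 * m) → Bool //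
        extWord m p 0 = true ∧ Splittable m (extWord m p) ∧
        lastRunLen m (extWord m p) = m} = 1 := by
  rw [Nat.card_eq_one_iff_unique]
  constructor
  · constructor
    rintro ⟨p, h0, hsp, hlr⟩ ⟨p', h0', hsp', hlr'⟩
    apply Subtype.ext
    show p = p'
    funext j
    rw [singleton_word m hm p h0 hsp hlr j, singleton_word m hm p' h0' hsp' hlr' j]
  · obtain ⟨a, b, c⟩ := model_word m hm
    exact ⟨⟨_, a, b, c⟩⟩

lemma card_filter_eq {α : Type*} [Fintype α] (P : α → Prop) [DecidablePred P] :
    (Finset.univ.filter P).card = Nat.card {x // P x} := by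
  rw [Nat.card_eq_fintype_card, Fintype.card_subtype]

lemma sum_geom (n : ℕ) : (∑ i ∈ Finset.range n, 2 * 3 ^ i) = 3 ^ n - 1 := by
  induction n with
  | zero => simp
  | succ n ih =>
    rw [Finset.sum_range_succ, ih, pow_succ]
    have h3 : 1 ≤ 3 ^ n := Nat.one_le_pow _ _ (by norm_num)
    omega

lemma Gval : ∀ m, 1 ≤ m →
    Nat.card {q : Fin (2 * m) → Bool //
      extWord m q 0 = true ∧ Splittable m (extWord m q)} = 3 ^ (m - 1) := by
  intro m
  induction m using Nat.strong_induction_on with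
  | _ m ih =>
    intro hm
    classical
    rw [← card_filter_eq]
    rw [Finset.card_eq_sum_card_fiberwise
      (f := fun p : Fin (2 * m) → Bool =>
        (lastRunLen m (extWord m p), extWord m p (2 * m - 1)))
      (t := Finset.Icc 1 m ×ˢ Finset.univ)
      (by
        intro p hp
        rw [Finset.mem_coe, Finset.mem_filter] at hp
        obtain ⟨-, h0, hsp⟩ := hp
        obtain ⟨t', h1', h2', -, -, hlr', -, -⟩ := keyA hm h0 hsp
        dsimp only
        rw [Finset.mem_coe, Finset.mem_product]
        exact ⟨Finset.mem_Icc.mpr ⟨by omega, by omega⟩, Finset.mem_univ _⟩)]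
    rw [Finset.sum_product]
    have hterm : ∀ tt : ℕ, ∀ bb : Bool,
        ((Finset.univ.filter (fun p : Fin (2 * m) → Bool =>
            extWord m p 0 = true ∧ Splittable m (extWord m p))).filter
          (fun p => (lastRunLen m (extWord m p), extWord m p (2 * m - 1)) = (tt, bb))).card
        = Nat.card {p : Fin (2 * m) → Bool //
            extWord m p 0 = true ∧ Splittable m (extWord m p) ∧
            lastRunLen m (extWord m p) = tt ∧ extWord m p (2 * m - 1) = bb} := by
      intro tt bb
      rw [Finset.filter_filter, card_filter_eq]
      apply Nat.card_congr
      apply Equiv.subtypeEquivRight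
      intro p
      rw [Prod.mk.injEq]
      tauto
    have hsum : ∀ tt ∈ Finset.Icc 1 m,
        (∑ bb : Bool,
          ((Finset.univ.filter (fun p : Fin (2 * m) → Bool =>
              extWord m p 0 = true ∧ Splittable m (extWord m p))).filter
            (fun p => (lastRunLen m (extWord m p), extWord m p (2 * m - 1)) = (tt, bb))).card)
        = (if tt = m then 1 else 2 * 3 ^ (m - tt - 1)) := by
      intro tt htt
      rw [Finset.mem_Icc] at htt
      rw [Fintype.sum_bool, hterm tt true, hterm tt false]
      by_cases hcase : tt = m
      · subst hcase
        rw [if_pos rfl]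
        have hT : Nat.card {p : Fin (2 * tt) → Bool //
            extWord tt p 0 = true ∧ Splittable tt (extWord tt p) ∧
            lastRunLen tt (extWord tt p) = tt ∧ extWord tt p (2 * tt - 1) = true} = 0 := by
          have : IsEmpty {p : Fin (2 * tt) → Bool //
              extWord tt p 0 = true ∧ Splittable tt (extWord tt p) ∧
              lastRunLen tt (extWord tt p) = tt ∧ extWord tt p (2 * tt - 1) = true} := by
            constructor
            rintro ⟨p, h0, hsp, hlr, hb⟩
            have := lastRun_m_end tt hm p h0 hsp hlr
            rw [this] at hb
            exact Bool.false_ne_true hb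
          exact Nat.card_of_isEmpty
        have hF : Nat.card {p : Fin (2 * tt) → Bool //
            extWord tt p 0 = true ∧ Splittable tt (extWord tt p) ∧
            lastRunLen tt (extWord tt p) = tt ∧ extWord tt p (2 * tt - 1) = false} =
            Nat.card {p : Fin (2 * tt) → Bool //
            extWord tt p 0 = true ∧ Splittable tt (extWord tt p) ∧
            lastRunLen tt (extWord tt p) = tt} := by
          apply Nat.card_congr
          apply Equiv.subtypeEquivRight
          intro p
          constructor
          · rintro ⟨a, b, c, d⟩; exact ⟨a, b, c⟩
          · rintro ⟨a, b, c⟩; exact ⟨a, b, c, lastRun_m_end tt hm p a b c⟩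
        rw [hT, hF, card_lastRun_full tt hm]
      · rw [if_neg hcase]
        have htlt : tt < m := by omega
        rw [card_S m tt htt.1 htlt true, card_S m tt htt.1 htlt false,
          ih (m - tt) (by omega) (by omega)]
        rw [← two_mul]
    rw [Finset.sum_congr rfl hsum]
    have hins : Finset.Icc 1 m = insert m (Finset.Icc 1 (m - 1)) := by
      ext x
      simp only [Finset.mem_Icc, Finset.mem_insert]
      omega
    rw [hins, Finset.sum_insert (by simp only [Finset.mem_Icc]; omega), if_pos rfl]
    have hrest : (∑ tt ∈ Finset.Icc 1 (m - 1),
        (if tt = m then 1 else 2 * 3 ^ (m - tt - 1)))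
        = ∑ i ∈ Finset.range (m - 1), 2 * 3 ^ i := by
      refine Finset.sum_nbij' (i := fun tt => m - 1 - tt) (j := fun i => m - 1 - i)
        ?_ ?_ ?_ ?_ ?_
      · intro a ha
        simp only [Finset.mem_Icc] at ha
        simp only [Finset.mem_range]
        omega
      · intro a ha
        simp only [Finset.mem_range] at ha
        simp only [Finset.mem_Icc]
        omega
      · intro a ha
        simp only [Finset.mem_Icc] at ha
        show m - 1 - (m - 1 - a) = a
        omega
      · intro a ha
        simp only [Finset.mem_range] at ha
        show m - 1 - (m - 1 - a) = a
        omega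
      · intro a ha
        simp only [Finset.mem_Icc] at ha
        show (if a = m then 1 else 2 * 3 ^ (m - a - 1)) = 2 * 3 ^ (m - 1 - a)
        rw [if_neg (by omega)]
        have he : m - a - 1 = m - 1 - a := by omega
        rw [he]
    rw [hrest, sum_geom]
    have h3 : 1 ≤ 3 ^ (m - 1) := Nat.one_le_pow _ _ (by norm_num)
    omega

/-- For `1 ≤ t ≤ r-1`, the number of splittable `r`-patterns whose unique block
decomposition ends in the block `AᵗBᵗ` (equivalently, last maximal run of length `t`
consisting of B's) plus the number ending in `BᵗAᵗ` equals `2·3^(r-t-1)`; and there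
is exactly one splittable `r`-pattern whose decomposition is a single block of size
`2r` (namely `AʳBʳ`, equivalently last maximal run of length `r`). -/
theorem stmt_8 (r t : ℕ) (hr : 2 ≤ r) (ht1 : 1 ≤ t) (ht2 : t ≤ r - 1) :
    (Nat.card {p : Fin (2 * r) → Bool //
          extWord r p 0 = true ∧ Splittable r (extWord r p) ∧
          lastRunLen r (extWord r p) = t ∧ extWord r p (2 * r - 1) = false} +
      Nat.card {p : Fin (2 * r) → Bool //
          extWord r p 0 = true ∧ Splittable r (extWord r p) ∧
          lastRunLen r (extWord r p) = t ∧ extWord r p (2 * r - 1) = true}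
        = 2 * 3 ^ (r - t - 1)) ∧
    Nat.card {p : Fin (2 * r) → Bool //
        extWord r p 0 = true ∧ Splittable r (extWord r p) ∧
        lastRunLen r (extWord r p) = r} = 1 := by
  constructor
  · rw [card_S r t ht1 (by omega) false, card_S r t ht1 (by omega) true,
      Gval (r - t) (by omega)]
    exact (two_mul _).symm
  · exact card_lastRun_full r (by omega)
end

section
/- Erdős–Szekeres theorem for ordered 2-matchings: let ℓ, s, w be positive integers and n ≥ ℓ·s·w + 1. Then every ordered 2-uniform matching of size n on [2n] contains ℓ+1 edges pairwise forming an alignment (a line), or s+1 edges pairwise forming a nesting (a stack), or w+1 edges pairwise forming a crossing (a wave). -/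
/-- Edges `e, f` (pairs with first coordinate the left endpoint) form an alignment:
pattern `AABB`. -/
def EdgeAlignment (e f : ℕ × ℕ) : Prop := e.1 < e.2 ∧ e.2 < f.1 ∧ f.1 < f.2

/-- Edges `e, f` form a nesting: pattern `ABBA`. -/
def Nesting (e f : ℕ × ℕ) : Prop := e.1 < f.1 ∧ f.1 < f.2 ∧ f.2 < e.2

/-- Edges `e, f` form a crossing: pattern `ABAB`. -/
def Crossing (e f : ℕ × ℕ) : Prop := e.1 < f.1 ∧ f.1 < e.2 ∧ e.2 < f.2

section Aux

attribute [local instance] Classical.propDecidable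

/-- `T` is an `R`-chain inside which `e` is the last element. -/
def ChainGood (R : ℕ × ℕ → ℕ × ℕ → Prop) (e : ℕ × ℕ) (T : Finset (ℕ × ℕ)) : Prop :=
  e ∈ T ∧ (∀ g ∈ T, g ≠ e → R g e) ∧ (∀ g ∈ T, ∀ h ∈ T, g ≠ h → R g h ∨ R h g)

/-- Height of `e` in `S` w.r.t. `R`: the largest chain in `S` ending at `e`. -/
noncomputable def chainHt (R : ℕ × ℕ → ℕ × ℕ → Prop) (S : Finset (ℕ × ℕ)) (e : ℕ × ℕ) : ℕ :=
  (S.powerset.filter (ChainGood R e)).sup Finset.card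

theorem chainHt_exists (R : ℕ × ℕ → ℕ × ℕ → Prop) (S : Finset (ℕ × ℕ)) (e : ℕ × ℕ)
    (he : e ∈ S) : ∃ T ⊆ S, ChainGood R e T ∧ T.card = chainHt R S e := by
  have hne : (S.powerset.filter (ChainGood R e)).Nonempty := by
    refine ⟨{e}, ?_⟩
    simp only [Finset.mem_filter, Finset.mem_powerset, Finset.singleton_subset_iff]
    refine ⟨he, Finset.mem_singleton_self e, ?_, ?_⟩ <;> intros <;> simp_all
  obtain ⟨T, hT, hTc⟩ := Finset.exists_mem_eq_sup _ hne Finset.card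
  simp only [Finset.mem_filter, Finset.mem_powerset] at hT
  exact ⟨T, hT.1, hT.2, hTc.symm⟩

theorem chainHt_pos (R : ℕ × ℕ → ℕ × ℕ → Prop) (S : Finset (ℕ × ℕ)) (e : ℕ × ℕ)
    (he : e ∈ S) : 1 ≤ chainHt R S e := by
  have : ({e} : Finset (ℕ × ℕ)) ∈ S.powerset.filter (ChainGood R e) := by
    simp only [Finset.mem_filter, Finset.mem_powerset, Finset.singleton_subset_iff]
    refine ⟨he, Finset.mem_singleton_self e, ?_, ?_⟩ <;> intros <;> simp_all
  have h2 : ({e} : Finset (ℕ × ℕ)).card ≤ chainHt R S e := Finset.le_sup (f := Finset.card) this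
  simpa using h2

theorem chainHt_lt (R : ℕ × ℕ → ℕ × ℕ → Prop)
    (htrans : ∀ a b c, R a b → R b c → R a c)
    (hasym : ∀ a b, R a b → ¬ R b a)
    (S : Finset (ℕ × ℕ)) (e f : ℕ × ℕ)
    (he : e ∈ S) (hf : f ∈ S) (hef : R e f) :
    chainHt R S e < chainHt R S f := by
  obtain ⟨T, hTS, ⟨heT, hlast, hpw⟩, hTc⟩ := chainHt_exists R S e he
  have hRge : ∀ g ∈ T, R g f := by
    intro g hg
    by_cases hge : g = e
    · subst hge; exact hef
    · exact htrans _ _ _ (hlast g hg hge) hef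
  have hfT : f ∉ T := by
    intro hfT
    exact hasym _ _ (hRge f hfT) (hRge f hfT)
  have hmem : insert f T ∈ S.powerset.filter (ChainGood R f) := by
    simp only [Finset.mem_filter, Finset.mem_powerset]
    refine ⟨Finset.insert_subset hf hTS, Finset.mem_insert_self _ _, ?_, ?_⟩
    · intro g hg hgf
      rcases Finset.mem_insert.1 hg with h | h
      · exact absurd h hgf
      · exact hRge g h
    · intro g hg h hh hgh
      rcases Finset.mem_insert.1 hg with hg' | hg' <;>
        rcases Finset.mem_insert.1 hh with hh' | hh'
      · exact absurd (hg'.trans hh'.symm) hgh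
      · subst hg'; exact Or.inr (hRge h hh')
      · subst hh'; exact Or.inl (hRge g hg')
      · exact hpw g hg' h hh' hgh
  have h2 : (insert f T).card ≤ chainHt R S f := Finset.le_sup (f := Finset.card) hmem
  rw [Finset.card_insert_of_notMem hfT, hTc] at h2
  omega

theorem step (R Q : ℕ × ℕ → ℕ × ℕ → Prop)
    (htrans : ∀ a b c, R a b → R b c → R a c)
    (hasym : ∀ a b, R a b → ¬ R b a)
    (S : Finset (ℕ × ℕ)) (m k : ℕ)
    (hpair : ∀ e ∈ S, ∀ f ∈ S, e ≠ f → R e f ∨ R f e ∨ Q e f ∨ Q f e)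
    (hcard : m * k < S.card) :
    (∃ T ⊆ S, m + 1 ≤ T.card ∧ ∀ e ∈ T, ∀ f ∈ T, e ≠ f → R e f ∨ R f e) ∨
    (∃ A ⊆ S, k < A.card ∧ ∀ e ∈ A, ∀ f ∈ A, e ≠ f → Q e f ∨ Q f e) := by
  by_cases h : ∃ e ∈ S, m + 1 ≤ chainHt R S e
  · obtain ⟨e, he, hm1⟩ := h
    obtain ⟨T, hTS, ⟨heT, hlast, hpw⟩, hTc⟩ := chainHt_exists R S e he
    exact Or.inl ⟨T, hTS, hTc ▸ hm1, hpw⟩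
  · push_neg at h
    have hmaps : ∀ e ∈ S, chainHt R S e ∈ Finset.Icc 1 m := by
      intro e he
      simp only [Finset.mem_Icc]
      exact ⟨chainHt_pos R S e he, by have := h e he; omega⟩
    have hcard' : (Finset.Icc 1 m).card * k < S.card := by
      rwa [Nat.card_Icc, Nat.add_sub_cancel]
    obtain ⟨v, hv, hfib⟩ :=
      Finset.exists_lt_card_fiber_of_mul_lt_card_of_maps_to hmaps hcard'
    refine Or.inr ⟨S.filter (fun e => chainHt R S e = v), Finset.filter_subset _ _, hfib, ?_⟩
    intro e heA f hfA hef
    simp only [Finset.mem_filter] at heA hfA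
    rcases hpair e heA.1 f hfA.1 hef with hr | hr | hq | hq
    · have := chainHt_lt R htrans hasym S e f heA.1 hfA.1 hr; omega
    · have := chainHt_lt R htrans hasym S f e hfA.1 heA.1 hr; omega
    · exact Or.inl hq
    · exact Or.inr hq

end Aux

/-- Erdős–Szekeres theorem for ordered 2-matchings: every ordered 2-uniform matching
of size `n ≥ ℓ·s·w + 1` on `[2n]` contains a line of size `ℓ+1`, a stack of size
`s+1`, or a wave of size `w+1`. -/
theorem stmt_10 (ℓ s w n : ℕ) (hl : 1 ≤ ℓ) (hs : 1 ≤ s) (hw : 1 ≤ w)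
    (hn : ℓ * s * w + 1 ≤ n)
    (M : Finset (ℕ × ℕ)) (hcard : M.card = n)
    (hord : ∀ e ∈ M, e.1 < e.2)
    (hrange : ∀ e ∈ M, e.2 < 2 * n)
    (hdisj : ∀ e ∈ M, ∀ f ∈ M, e ≠ f →
      e.1 ≠ f.1 ∧ e.1 ≠ f.2 ∧ e.2 ≠ f.1 ∧ e.2 ≠ f.2)
    (hcover : ∀ v < 2 * n, ∃ e ∈ M, v = e.1 ∨ v = e.2) :
    (∃ L ⊆ M, L.card = ℓ + 1 ∧
        ∀ e ∈ L, ∀ f ∈ L, e ≠ f → EdgeAlignment e f ∨ EdgeAlignment f e) ∨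
    (∃ L ⊆ M, L.card = s + 1 ∧
        ∀ e ∈ L, ∀ f ∈ L, e ≠ f → Nesting e f ∨ Nesting f e) ∨
    (∃ L ⊆ M, L.card = w + 1 ∧
        ∀ e ∈ L, ∀ f ∈ L, e ≠ f → Crossing e f ∨ Crossing f e) := by
  have halignT : ∀ a b c, EdgeAlignment a b → EdgeAlignment b c → EdgeAlignment a c := by
    intro a b c h1 h2; unfold EdgeAlignment at *; omega
  have halignA : ∀ a b, EdgeAlignment a b → ¬ EdgeAlignment b a := by
    intro a b h1 h2; unfold EdgeAlignment at *; omega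
  have hnestT : ∀ a b c, Nesting a b → Nesting b c → Nesting a c := by
    intro a b c h1 h2; unfold Nesting at *; omega
  have hnestA : ∀ a b, Nesting a b → ¬ Nesting b a := by
    intro a b h1 h2; unfold Nesting at *; omega
  have hpair : ∀ e ∈ M, ∀ f ∈ M, e ≠ f →
      EdgeAlignment e f ∨ EdgeAlignment f e ∨
      (Nesting e f ∨ Crossing e f) ∨ (Nesting f e ∨ Crossing f e) := by
    intro e he f hf hef
    have h1 := hord e he
    have h2 := hord f hf
    have h3 := hdisj e he f hf hef
    unfold EdgeAlignment Nesting Crossing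
    omega
  have hcard1 : ℓ * (s * w) < M.card := by
    rw [hcard, ← mul_assoc]; omega
  rcases step EdgeAlignment (fun e f => Nesting e f ∨ Crossing e f)
      halignT halignA M ℓ (s * w) hpair hcard1 with ⟨T, hTS, hTc, hTpw⟩ | ⟨A, hAS, hAc, hApw⟩
  · obtain ⟨L, hLT, hLc⟩ := Finset.exists_subset_card_eq hTc
    exact Or.inl ⟨L, hLT.trans hTS, hLc,
      fun e he f hf hef => hTpw e (hLT he) f (hLT hf) hef⟩
  · have hpair2 : ∀ e ∈ A, ∀ f ∈ A, e ≠ f →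
        Nesting e f ∨ Nesting f e ∨ Crossing e f ∨ Crossing f e := by
      intro e he f hf hef
      rcases hApw e he f hf hef with (h | h) | (h | h) <;> tauto
    rcases step Nesting Crossing hnestT hnestA A s w hpair2 hAc with
        ⟨T, hTS, hTc, hTpw⟩ | ⟨B, hBS, hBc, hBpw⟩
    · obtain ⟨L, hLT, hLc⟩ := Finset.exists_subset_card_eq hTc
      exact Or.inr (Or.inl ⟨L, (hLT.trans hTS).trans hAS, hLc,
        fun e he f hf hef => hTpw e (hLT he) f (hLT hf) hef⟩)
    · obtain ⟨L, hLB, hLc⟩ := Finset.exists_subset_card_eq hBc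
      exact Or.inr (Or.inr ⟨L, (hLB.trans hBS).trans hAS, hLc,
        fun e he f hf hef => hBpw e (hLB he) f (hLB hf) hef⟩)
end

section
/- Sharpness of the Erdős–Szekeres theorem for ordered 2-matchings: for all positive integers ℓ, s, w there exists an ordered 2-uniform matching of size exactly ℓ·s·w containing no line of size ℓ+1, no stack of size s+1, and no wave of size w+1. -/
namespace Stmt11Aux

/-- Vertex in block `j` (of `2s` blocks) of copy `i`, position `k` in the block. -/
def V (s w i j k : ℕ) : ℕ := w * (2 * s * i + j) + k

/-- Edge of the blow-up construction `L_ℓ[S_s[W_w]]`. -/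
def E (s w i j k : ℕ) : ℕ × ℕ := (V s w i j k, V s w i (2 * s - 1 - j) k)

lemma lexle {n a b a' b' : ℕ} (h : n * a + b ≤ n * a' + b') (hb' : b' < n) :
    a ≤ a' := by
  by_contra hc
  push_neg at hc
  have h2 : n * (a' + 1) ≤ n * a := Nat.mul_le_mul_left n hc
  rw [Nat.mul_succ] at h2
  linarith

lemma lexlt {n a b a' b' : ℕ} (h : n * a + b ≤ n * a' + b') (hb : b' < b) :
    a < a' := by
  by_contra hc
  push_neg at hc
  have h2 : n * a' ≤ n * a := Nat.mul_le_mul_left n hc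
  linarith

lemma Vle {s w i j k i' j' k' : ℕ} (hk' : k' < w)
    (h : V s w i j k < V s w i' j' k') : 2 * s * i + j ≤ 2 * s * i' + j' :=
  lexle (le_of_lt h) hk'

lemma Vlt_of {s w i j k i' j' k' : ℕ} (hk : k < w)
    (h : 2 * s * i + j < 2 * s * i' + j') : V s w i j k < V s w i' j' k' := by
  unfold V
  have h2 : w * (2 * s * i + j + 1) ≤ w * (2 * s * i' + j') :=
    Nat.mul_le_mul_left w h
  rw [Nat.mul_succ] at h2
  linarith

lemma Vinj {s w i j k i' j' k' : ℕ} (hj : j < 2 * s) (hk : k < w)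
    (hj' : j' < 2 * s) (hk' : k' < w)
    (h : V s w i j k = V s w i' j' k') : i = i' ∧ j = j' ∧ k = k' := by
  have h1 : 2 * s * i + j ≤ 2 * s * i' + j' := lexle (le_of_eq h) hk'
  have h2 : 2 * s * i' + j' ≤ 2 * s * i + j := lexle (le_of_eq h.symm) hk
  have hi : i = i' := le_antisymm (lexle h1 hj') (lexle h2 hj)
  subst hi
  have hC : 2 * s * i + j = 2 * s * i + j' := le_antisymm h1 h2
  have hjj : j = j' := Nat.add_left_cancel hC
  subst hjj
  unfold V at h
  exact ⟨rfl, rfl, Nat.add_left_cancel h⟩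

lemma Vdec {s w i j k : ℕ} (hs : 0 < s) (hw : 0 < w) (hj : j < 2 * s)
    (hk : k < w) :
    V s w i j k % w = k ∧ (V s w i j k / w) % (2 * s) = j ∧
      V s w i j k / w / (2 * s) = i := by
  have h2s : 0 < 2 * s := by omega
  have e1 : V s w i j k % w = k := by
    unfold V; rw [Nat.mul_add_mod, Nat.mod_eq_of_lt hk]
  have e2 : V s w i j k / w = 2 * s * i + j := by
    unfold V; rw [Nat.mul_add_div hw, Nat.div_eq_of_lt hk, Nat.add_zero]
  refine ⟨e1, ?_, ?_⟩
  · rw [e2, Nat.mul_add_mod, Nat.mod_eq_of_lt hj]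
  · rw [e2, Nat.mul_add_div h2s, Nat.div_eq_of_lt hj, Nat.add_zero]

lemma align_i {s w i j k i' j' k' : ℕ} (hs : 1 ≤ s) (hj : j < s) (hk : k < w)
    (hj' : j' < s) (hk' : k' < w)
    (h : EdgeAlignment (E s w i j k) (E s w i' j' k')) : i < i' := by
  obtain ⟨-, h2, -⟩ := h
  have hle : 2 * s * i + (2 * s - 1 - j) ≤ 2 * s * i' + j' := Vle hk' h2
  exact lexlt hle (by omega)

lemma nest_ij {s w i j k i' j' k' : ℕ} (hs : 1 ≤ s) (hj : j < s) (hk : k < w)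
    (hj' : j' < s) (hk' : k' < w)
    (h : Nesting (E s w i j k) (E s w i' j' k')) : i = i' ∧ j < j' := by
  obtain ⟨h1, -, h3⟩ := h
  have a1 : 2 * s * i + j ≤ 2 * s * i' + j' := Vle hk' h1
  have a3 : 2 * s * i' + (2 * s - 1 - j') ≤ 2 * s * i + (2 * s - 1 - j) :=
    Vle hk h3
  have hi : i = i' := le_antisymm (lexle a1 (by omega)) (lexle a3 (by omega))
  subst hi
  have hjle : j ≤ j' := Nat.le_of_add_le_add_left a1
  have hne : j ≠ j' := by
    intro hjj
    subst hjj
    have c1 : k < k' := Nat.lt_of_add_lt_add_left h1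
    have c3 : k' < k := Nat.lt_of_add_lt_add_left h3
    omega
  exact ⟨rfl, lt_of_le_of_ne hjle hne⟩

lemma cross_ijk {s w i j k i' j' k' : ℕ} (hs : 1 ≤ s) (hj : j < s) (hk : k < w)
    (hj' : j' < s) (hk' : k' < w)
    (h : Crossing (E s w i j k) (E s w i' j' k')) :
    i = i' ∧ j = j' ∧ k < k' := by
  obtain ⟨h1, h2, h3⟩ := h
  have a1 : 2 * s * i + j ≤ 2 * s * i' + j' := Vle hk' h1
  have a2 : 2 * s * i' + j' ≤ 2 * s * i + (2 * s - 1 - j) := Vle hk h2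
  have a3 : 2 * s * i + (2 * s - 1 - j) ≤ 2 * s * i' + (2 * s - 1 - j') :=
    Vle hk' h3
  have hi : i = i' := le_antisymm (lexle a1 (by omega)) (lexle a2 (by omega))
  subst hi
  have b1 : j ≤ j' := Nat.le_of_add_le_add_left a1
  have b3 : 2 * s - 1 - j ≤ 2 * s - 1 - j' := Nat.le_of_add_le_add_left a3
  have hjj : j = j' := by omega
  subst hjj
  exact ⟨rfl, rfl, Nat.lt_of_add_lt_add_left h1⟩

end Stmt11Aux

open Stmt11Aux in
/-- Sharpness of the Erdős–Szekeres theorem for ordered 2-matchings: there is an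
ordered 2-uniform matching of size exactly `ℓ·s·w` with no line of size `ℓ+1`, no
stack of size `s+1`, and no wave of size `w+1`. -/
theorem stmt_11 (ℓ s w : ℕ) (hl : 1 ≤ ℓ) (hs : 1 ≤ s) (hw : 1 ≤ w) :
    ∃ M : Finset (ℕ × ℕ),
      M.card = ℓ * s * w ∧
      (∀ e ∈ M, e.1 < e.2) ∧
      (∀ e ∈ M, e.2 < 2 * (ℓ * s * w)) ∧
      (∀ e ∈ M, ∀ f ∈ M, e ≠ f →
        e.1 ≠ f.1 ∧ e.1 ≠ f.2 ∧ e.2 ≠ f.1 ∧ e.2 ≠ f.2) ∧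
      (∀ v < 2 * (ℓ * s * w), ∃ e ∈ M, v = e.1 ∨ v = e.2) ∧
      ¬ (∃ L ⊆ M, L.card = ℓ + 1 ∧
          ∀ e ∈ L, ∀ f ∈ L, e ≠ f → EdgeAlignment e f ∨ EdgeAlignment f e) ∧
      ¬ (∃ L ⊆ M, L.card = s + 1 ∧
          ∀ e ∈ L, ∀ f ∈ L, e ≠ f → Nesting e f ∨ Nesting f e) ∧
      ¬ (∃ L ⊆ M, L.card = w + 1 ∧
          ∀ e ∈ L, ∀ f ∈ L, e ≠ f → Crossing e f ∨ Crossing f e) := by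
  have hw0 : 0 < w := hw
  have hs0 : 0 < s := hs
  have h2s : 0 < 2 * s := by omega
  set M : Finset (ℕ × ℕ) :=
    (Finset.range ℓ ×ˢ Finset.range s ×ˢ Finset.range w).image
      (fun p => E s w p.1 p.2.1 p.2.2) with hMdef
  have mem_iff : ∀ e, e ∈ M ↔
      ∃ i j k, i < ℓ ∧ j < s ∧ k < w ∧ e = E s w i j k := by
    intro e
    simp only [hMdef, Finset.mem_image, Finset.mem_product, Finset.mem_range]
    constructor
    · rintro ⟨⟨i, j, k⟩, ⟨hi, hj, hk⟩, rfl⟩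
      exact ⟨i, j, k, hi, hj, hk, rfl⟩
    · rintro ⟨i, j, k, hi, hj, hk, rfl⟩
      exact ⟨(i, j, k), ⟨hi, hj, hk⟩, rfl⟩
  refine ⟨M, ?_, ?_, ?_, ?_, ?_, ?_, ?_, ?_⟩
  · -- cardinality
    rw [hMdef, Finset.card_image_of_injOn, Finset.card_product,
      Finset.card_product, Finset.card_range, Finset.card_range,
      Finset.card_range, Nat.mul_assoc]
    rintro ⟨i, j, k⟩ hp ⟨i', j', k'⟩ hp' he
    simp only [Finset.coe_product, Set.mem_prod, Finset.mem_coe,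
      Finset.mem_range] at hp hp'
    obtain ⟨hi, hj, hk⟩ := hp
    obtain ⟨hi', hj', hk'⟩ := hp'
    have h1 : V s w i j k = V s w i' j' k' := congrArg Prod.fst he
    obtain ⟨e1, e2, e3⟩ := Vinj (by omega) hk (by omega) hk' h1
    simp [e1, e2, e3]
  · -- e.1 < e.2
    intro e he
    obtain ⟨i, j, k, hi, hj, hk, rfl⟩ := (mem_iff e).1 he
    exact Vlt_of hk (by omega)
  · -- e.2 < 2*(ℓ*s*w)
    intro e he
    obtain ⟨i, j, k, hi, hj, hk, rfl⟩ := (mem_iff e).1 he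
    show V s w i (2 * s - 1 - j) k < 2 * (ℓ * s * w)
    have key : 2 * s * i + (2 * s - 1 - j) + 1 ≤ 2 * s * ℓ := by
      have h1 : 2 * s * (i + 1) ≤ 2 * s * ℓ := Nat.mul_le_mul_left _ (by omega)
      rw [Nat.mul_succ] at h1
      omega
    calc V s w i (2 * s - 1 - j) k
        < w * (2 * s * i + (2 * s - 1 - j) + 1) := by
          unfold V; rw [Nat.mul_succ]; omega
      _ ≤ w * (2 * s * ℓ) := Nat.mul_le_mul_left w key
      _ = 2 * (ℓ * s * w) := by ring
  · -- distinct endpoints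
    intro e he f hf hef
    obtain ⟨i, j, k, hi, hj, hk, rfl⟩ := (mem_iff e).1 he
    obtain ⟨i', j', k', hi', hj', hk', rfl⟩ := (mem_iff f).1 hf
    refine ⟨?_, ?_, ?_, ?_⟩
    · intro h
      obtain ⟨e1, e2, e3⟩ := Vinj (by omega) hk (by omega) hk' h
      exact hef (by simp [E, e1, e2, e3])
    · intro h
      obtain ⟨e1, e2, e3⟩ := Vinj (by omega) hk (by omega) hk' h
      omega
    · intro h
      obtain ⟨e1, e2, e3⟩ := Vinj (by omega) hk (by omega) hk' h
      omega
    · intro h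
      obtain ⟨e1, e2, e3⟩ := Vinj (by omega) hk (by omega) hk' h
      have : j = j' := by omega
      exact hef (by simp [E, e1, this, e3])
  · -- every vertex is covered
    intro v hv
    have hkw : v % w < w := Nat.mod_lt _ hw0
    have hj0 : (v / w) % (2 * s) < 2 * s := Nat.mod_lt _ h2s
    have hi : v / w / (2 * s) < ℓ := by
      have h1 : v < ℓ * (2 * s) * w := by
        calc v < 2 * (ℓ * s * w) := hv
          _ = ℓ * (2 * s) * w := by ring
      have h2 : v / w < ℓ * (2 * s) := (Nat.div_lt_iff_lt_mul hw0).2 h1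
      exact (Nat.div_lt_iff_lt_mul h2s).2 h2
    have hveq : v = V s w (v / w / (2 * s)) ((v / w) % (2 * s)) (v % w) := by
      unfold V
      have d2 : 2 * s * (v / w / (2 * s)) + (v / w) % (2 * s) = v / w :=
        Nat.div_add_mod (v / w) (2 * s)
      rw [d2]
      exact (Nat.div_add_mod v w).symm
    by_cases hcase : (v / w) % (2 * s) < s
    · refine ⟨E s w (v / w / (2 * s)) ((v / w) % (2 * s)) (v % w),
        (mem_iff _).2 ⟨_, _, _, hi, hcase, hkw, rfl⟩, Or.inl hveq⟩
    · refine ⟨E s w (v / w / (2 * s)) (2 * s - 1 - (v / w) % (2 * s)) (v % w),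
        (mem_iff _).2 ⟨_, _, _, hi, by omega, hkw, rfl⟩, Or.inr ?_⟩
      show v = V s w (v / w / (2 * s))
        (2 * s - 1 - (2 * s - 1 - (v / w) % (2 * s))) (v % w)
      have hrw : 2 * s - 1 - (2 * s - 1 - (v / w) % (2 * s)) =
          (v / w) % (2 * s) := by omega
      rw [hrw]
      exact hveq
  · -- no line of size ℓ+1
    rintro ⟨L, hLM, hLcard, hLrel⟩
    have hcard : L.card ≤ (Finset.range ℓ).card := by
      refine Finset.card_le_card_of_injOn (fun e => e.1 / w / (2 * s)) ?_ ?_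
      · intro e heL
        obtain ⟨i, j, k, hi, hj, hk, rfl⟩ := (mem_iff e).1 (hLM heL)
        have := (Vdec (i := i) hs0 hw0 (show j < 2 * s by omega) hk).2.2
        simpa [Finset.mem_range, E, this] using hi
      · intro e heL f hfL hdf
        by_contra hef
        obtain ⟨i, j, k, hi, hj, hk, rfl⟩ := (mem_iff e).1 (hLM heL)
        obtain ⟨i', j', k', hi', hj', hk', rfl⟩ := (mem_iff f).1 (hLM hfL)
        have de := (Vdec (i := i) hs0 hw0 (show j < 2 * s by omega) hk).2.2
        have df := (Vdec (i := i') hs0 hw0 (show j' < 2 * s by omega) hk').2.2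
        have hii : i = i' := by
          simpa [E, de, df] using hdf
        rcases hLrel _ heL _ hfL hef with h | h
        · exact absurd hii (Nat.ne_of_lt (align_i hs hj hk hj' hk' h))
        · exact absurd hii.symm (Nat.ne_of_lt (align_i hs hj' hk' hj hk h))
    rw [hLcard, Finset.card_range] at hcard
    omega
  · -- no stack of size s+1
    rintro ⟨L, hLM, hLcard, hLrel⟩
    have hcard : L.card ≤ (Finset.range s).card := by
      refine Finset.card_le_card_of_injOn (fun e => (e.1 / w) % (2 * s)) ?_ ?_
      · intro e heL
        obtain ⟨i, j, k, hi, hj, hk, rfl⟩ := (mem_iff e).1 (hLM heL)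
        have := (Vdec (i := i) hs0 hw0 (show j < 2 * s by omega) hk).2.1
        simpa [Finset.mem_range, E, this] using hj
      · intro e heL f hfL hdf
        by_contra hef
        obtain ⟨i, j, k, hi, hj, hk, rfl⟩ := (mem_iff e).1 (hLM heL)
        obtain ⟨i', j', k', hi', hj', hk', rfl⟩ := (mem_iff f).1 (hLM hfL)
        have de := (Vdec (i := i) hs0 hw0 (show j < 2 * s by omega) hk).2.1
        have df := (Vdec (i := i') hs0 hw0 (show j' < 2 * s by omega) hk').2.1
        have hjj : j = j' := by
          simpa [E, de, df] using hdf
        rcases hLrel _ heL _ hfL hef with h | h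
        · exact absurd hjj (Nat.ne_of_lt (nest_ij hs hj hk hj' hk' h).2)
        · exact absurd hjj.symm (Nat.ne_of_lt (nest_ij hs hj' hk' hj hk h).2)
    rw [hLcard, Finset.card_range] at hcard
    omega
  · -- no wave of size w+1
    rintro ⟨L, hLM, hLcard, hLrel⟩
    have hcard : L.card ≤ (Finset.range w).card := by
      refine Finset.card_le_card_of_injOn (fun e => e.1 % w) ?_ ?_
      · intro e heL
        obtain ⟨i, j, k, hi, hj, hk, rfl⟩ := (mem_iff e).1 (hLM heL)
        have := (Vdec (i := i) hs0 hw0 (show j < 2 * s by omega) hk).1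
        simpa [Finset.mem_range, E, this] using hk
      · intro e heL f hfL hdf
        by_contra hef
        obtain ⟨i, j, k, hi, hj, hk, rfl⟩ := (mem_iff e).1 (hLM heL)
        obtain ⟨i', j', k', hi', hj', hk', rfl⟩ := (mem_iff f).1 (hLM hfL)
        have de := (Vdec (i := i) hs0 hw0 (show j < 2 * s by omega) hk).1
        have df := (Vdec (i := i') hs0 hw0 (show j' < 2 * s by omega) hk').1
        have hkk : k = k' := by
          simpa [E, de, df] using hdf
        rcases hLrel _ heL _ hfL hef with h | h
        · exact absurd hkk (Nat.ne_of_lt (cross_ijk hs hj hk hj' hk' h).2.2)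
        · exact absurd hkk.symm (Nat.ne_of_lt (cross_ijk hs hj' hk' hj hk h).2.2)
    rw [hLcard, Finset.card_range] at hcard
    omega
end

section
/- For integers r ≥ 2, s ≥ 2 and s-1 ≤ m ≤ rn-1, the number of s-element subsets S of [rn] whose length (maximum element minus minimum element) is at most m equals rn·C(m, s-1) − (s-1)·C(m+1, s). -/
open Finset

private lemma hockey (t : ℕ) : ∀ M, ∑ j ∈ Finset.range M, Nat.choose j t = Nat.choose M (t + 1) := by
  intro M
  induction M with
  | zero => simp
  | succ M ih =>
    rw [Finset.sum_range_succ, ih]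
    have := Nat.choose_succ_succ M t
    simp only [Nat.succ_eq_add_one] at this
    omega

/-- For `r ≥ 2`, `s ≥ 2` and `s-1 ≤ m ≤ rn-1`, the number of `s`-element subsets of
`[rn]` whose length (max minus min) is at most `m` equals
`rn·C(m, s-1) − (s-1)·C(m+1, s)`. -/
theorem stmt_15 (r n s m : ℕ) (hr : 2 ≤ r) (hs : 2 ≤ s)
    (hm1 : s - 1 ≤ m) (hm2 : m ≤ r * n - 1) :
    Nat.card {S : Finset (Fin (r * n)) //
        S.card = s ∧ ∀ a ∈ S, ∀ b ∈ S, (b : ℕ) - (a : ℕ) ≤ m}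
      = r * n * Nat.choose m (s - 1) - (s - 1) * Nat.choose (m + 1) s := by
  classical
  obtain ⟨t, rfl⟩ : ∃ t, s = t + 2 := ⟨s - 2, by omega⟩
  have hN : m + 1 ≤ r * n := by
    rcases Nat.eq_zero_or_pos (r * n) with h | h <;> omega
  set N := r * n with hNdef
  have hpos : 0 < N := by omega
  have hs1 : t + 2 - 1 = t + 1 := rfl
  rw [hs1]
  let dft : Fin N := ⟨0, hpos⟩
  set P : Finset (Fin N) → Prop :=
    fun S => S.card = t + 2 ∧ ∀ a ∈ S, ∀ b ∈ S, (b : ℕ) - (a : ℕ) ≤ m with hP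
  have h1 : Nat.card {S : Finset (Fin N) // P S} = (univ.filter P).card := by
    rw [Nat.card_eq_fintype_card, Fintype.card_subtype]
  rw [h1]
  set F := univ.filter P with hF
  have h2 : F.card = ∑ i ∈ (univ : Finset (Fin N)),
      (F.filter fun S => (if h : S.Nonempty then S.min' h else dft) = i).card :=
    card_eq_sum_card_fiberwise (fun x _ => mem_univ _)
  have key : ∀ i : Fin N, (F.filter fun S => (if h : S.Nonempty then S.min' h else dft) = i).card
      = Nat.choose (min m (N - 1 - (i : ℕ))) (t + 1) := by
    intro i
    have hiN := i.isLt
    set u : Fin N := ⟨min ((i : ℕ) + m) (N - 1), by omega⟩ with hu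
    have hcard : (F.filter fun S => (if h : S.Nonempty then S.min' h else dft) = i).card
        = ((Ioc i u).powersetCard (t + 1)).card := by
      have hmemF : ∀ S ∈ (F.filter fun S => (if h : S.Nonempty then S.min' h else dft) = i),
          S.card = t + 2 ∧ (∀ a ∈ S, ∀ b ∈ S, (b : ℕ) - (a : ℕ) ≤ m) ∧ i ∈ S ∧ ∀ b ∈ S, i ≤ b := by
        intro S hS
        rw [mem_filter, hF, mem_filter] at hS
        obtain ⟨⟨-, hcardS, hlen⟩, hmin⟩ := hS
        have hne : S.Nonempty := card_pos.mp (by omega)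
        rw [dif_pos hne] at hmin
        exact ⟨hcardS, hlen, hmin ▸ S.min'_mem hne, fun b hb => hmin ▸ S.min'_le b hb⟩
      apply card_nbij' (fun S => S.erase i) (fun T => insert i T)
      · intro S hS
        obtain ⟨hcardS, hlen, hiS, hle⟩ := hmemF S hS
        rw [Finset.mem_coe, mem_powersetCard]
        constructor
        · intro b hb
          rw [mem_erase] at hb
          rw [mem_Ioc]
          refine ⟨lt_of_le_of_ne (hle b hb.2) (fun h => hb.1 h.symm), ?_⟩
          have h3 := hlen i hiS b hb.2
          have h4 := b.isLt
          rw [Fin.le_def]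
          simp only [hu]
          omega
        · rw [card_erase_of_mem hiS]; omega
      · intro T hT
        rw [Finset.mem_coe, mem_powersetCard] at hT
        obtain ⟨hTsub, hTcard⟩ := hT
        have hbound : ∀ b ∈ T, (i : ℕ) < (b : ℕ) ∧ (b : ℕ) ≤ (i : ℕ) + m := by
          intro b hb
          have := mem_Ioc.mp (hTsub hb)
          have h5 : (i : ℕ) < (b : ℕ) := this.1
          have h6 : (b : ℕ) ≤ (u : ℕ) := this.2
          simp only [hu] at h6
          exact ⟨h5, by omega⟩
        have hiT : i ∉ T := fun h => absurd (hbound i h).1 (lt_irrefl _)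
        rw [Finset.mem_coe, mem_filter, hF, mem_filter]
        refine ⟨⟨mem_univ _, ?_, ?_⟩, ?_⟩
        · rw [card_insert_of_notMem hiT, hTcard]
        · intro a ha b hb
          rcases mem_insert.mp ha with rfl | ha' <;> rcases mem_insert.mp hb with rfl | hb'
          · omega
          · have := hbound b hb'; omega
          · have := hbound a ha'; omega
          · have h7 := hbound a ha'; have h8 := hbound b hb'; omega
        · have hne : (insert i T).Nonempty := insert_nonempty _ _
          rw [dif_pos hne]
          apply le_antisymm
          · exact min'_le _ i (mem_insert_self _ _)
          · apply le_min'
            intro b hb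
            rcases mem_insert.mp hb with rfl | hb'
            · exact le_refl _
            · exact le_of_lt (Fin.lt_def.mpr (hbound b hb').1)
      · intro S hS
        exact insert_erase (hmemF S hS).2.2.1
      · intro T hT
        rw [Finset.mem_coe, mem_powersetCard] at hT
        have hiT : i ∉ T := fun h => absurd (mem_Ioc.mp (hT.1 h)).1 (lt_irrefl _)
        exact erase_insert hiT
    rw [hcard, card_powersetCard, Fin.card_Ioc]
    congr 1
    simp only [hu]
    omega
  rw [h2]
  have h3 : ∑ i : Fin N,
      (F.filter fun S => (if h : S.Nonempty then S.min' h else dft) = i).card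
      = ∑ j ∈ range N, Nat.choose (min m (N - 1 - j)) (t + 1) := by
    rw [← Fin.sum_univ_eq_sum_range (fun j => Nat.choose (min m (N - 1 - j)) (t + 1)) N]
    exact Finset.sum_congr rfl fun i _ => key i
  rw [h3]
  have h4 : ∑ j ∈ range N, Nat.choose (min m (N - 1 - j)) (t + 1)
      = ∑ j ∈ range N, Nat.choose (min m j) (t + 1) :=
    Finset.sum_range_reflect (fun j => Nat.choose (min m j) (t + 1)) N
  rw [h4]
  have h5 : ∑ j ∈ range N, Nat.choose (min m j) (t + 1)
      = Nat.choose (m + 1) (t + 2) + (N - (m + 1)) * Nat.choose m (t + 1) := by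
    rw [Finset.range_eq_Ico, ← Finset.sum_Ico_consecutive _ (Nat.zero_le (m + 1)) hN,
      ← Finset.range_eq_Ico]
    congr 1
    · rw [show ∑ j ∈ range (m + 1), Nat.choose (min m j) (t + 1)
          = ∑ j ∈ range (m + 1), Nat.choose j (t + 1) from
        Finset.sum_congr rfl fun j hj => by
          rw [min_eq_right (by have := mem_range.mp hj; omega)]]
      exact hockey (t + 1) (m + 1)
    · rw [show ∑ j ∈ Ico (m + 1) N, Nat.choose (min m j) (t + 1)
          = ∑ _j ∈ Ico (m + 1) N, Nat.choose m (t + 1) from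
        Finset.sum_congr rfl fun j hj => by
          rw [min_eq_left (by have := (mem_Ico.mp hj).1; omega)]]
      rw [Finset.sum_const, Nat.card_Ico, smul_eq_mul]
  rw [h5]
  -- final arithmetic
  set a := Nat.choose m (t + 1) with ha
  set c := Nat.choose (m + 1) (t + 2) with hc
  have h6 : (m + 1) * a = c * (t + 2) := Nat.add_one_mul_choose_eq m (t + 1)
  have h7 : c + (N - (m + 1)) * a + (t + 1) * c = N * a := by
    calc c + (N - (m + 1)) * a + (t + 1) * c
        = (c + (t + 1) * c) + (N - (m + 1)) * a := by ring
      _ = (m + 1) * a + (N - (m + 1)) * a := by rw [show c + (t+1)*c = c*(t+2) by ring, ← h6]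
      _ = ((m + 1) + (N - (m + 1))) * a := (add_mul _ _ _).symm
      _ = N * a := by congr 1; omega
  exact Nat.eq_sub_of_add_eq h7
end

section
/- Pattern 3-matching rigidity: if M is an ordered 3-uniform matching in which every pair of edges forms either pattern P3 = AABBAB or pattern P7 = ABAABB, then all pairs of edges of M form the same pattern (M is entirely a P3-clique or entirely a P7-clique). -/
/-- Edges `e, f` (3-sets) form pattern `P3 = AABBAB`:
`a1 < a2 < b1 < b2 < a3 < b3`. -/
def PatternP3 (e f : Finset ℕ) : Prop :=
  ∃ a1 a2 a3 b1 b2 b3 : ℕ, e = {a1, a2, a3} ∧ f = {b1, b2, b3} ∧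
    a1 < a2 ∧ a2 < b1 ∧ b1 < b2 ∧ b2 < a3 ∧ a3 < b3

/-- Edges `e, f` (3-sets) form pattern `P7 = ABAABB`:
`a1 < b1 < a2 < a3 < b2 < b3`. -/
def PatternP7 (e f : Finset ℕ) : Prop :=
  ∃ a1 a2 a3 b1 b2 b3 : ℕ, e = {a1, a2, a3} ∧ f = {b1, b2, b3} ∧
    a1 < b1 ∧ b1 < a2 ∧ a2 < a3 ∧ a3 < b2 ∧ b2 < b3

lemma eq3 {x1 x2 x3 y1 y2 y3 : ℕ} (h : ({x1, x2, x3} : Finset ℕ) = {y1, y2, y3})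
    (h12 : x1 < x2) (h23 : x2 < x3) (g12 : y1 < y2) (g23 : y2 < y3) :
    x1 = y1 ∧ x2 = y2 ∧ x3 = y3 := by
  have h' := Finset.ext_iff.mp h
  simp only [Finset.mem_insert, Finset.mem_singleton] at h'
  have a1 := (h' x1).mp (Or.inl rfl)
  have a2 := (h' x2).mp (Or.inr (Or.inl rfl))
  have a3 := (h' x3).mp (Or.inr (Or.inr rfl))
  have b1 := (h' y1).mpr (Or.inl rfl)
  have b2 := (h' y2).mpr (Or.inr (Or.inl rfl))
  have b3 := (h' y3).mpr (Or.inr (Or.inr rfl))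
  rcases a1 with rfl | rfl | rfl <;> rcases a2 with h2' | h2' | h2' <;>
    rcases a3 with h3' | h3' | h3' <;> omega

lemma q3_arith {e f : Finset ℕ} {e1 e2 e3 f1 f2 f3 : ℕ}
    (he : e = {e1, e2, e3}) (hf : f = {f1, f2, f3})
    (s1 : e1 < e2) (s2 : e2 < e3) (s3 : f1 < f2) (s4 : f2 < f3)
    (h : PatternP3 e f ∨ PatternP3 f e) :
    (e2 < f1 ∧ f2 < e3 ∧ e3 < f3) ∨ (f2 < e1 ∧ e2 < f3 ∧ f3 < e3) := by
  rcases h with ⟨x1, x2, x3, y1, y2, y3, hx, hy, p1, p2, p3, p4, p5⟩ |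
    ⟨y1, y2, y3, x1, x2, x3, hy, hx, p1, p2, p3, p4, p5⟩
  · obtain ⟨u1, u2, u3⟩ := eq3 (he.symm.trans hx) s1 s2 (by omega) (by omega)
    obtain ⟨v1, v2, v3⟩ := eq3 (hf.symm.trans hy) s3 s4 (by omega) (by omega)
    omega
  · obtain ⟨u1, u2, u3⟩ := eq3 (he.symm.trans hx) s1 s2 (by omega) (by omega)
    obtain ⟨v1, v2, v3⟩ := eq3 (hf.symm.trans hy) s3 s4 (by omega) (by omega)
    omega

lemma q7_arith {e f : Finset ℕ} {e1 e2 e3 f1 f2 f3 : ℕ}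
    (he : e = {e1, e2, e3}) (hf : f = {f1, f2, f3})
    (s1 : e1 < e2) (s2 : e2 < e3) (s3 : f1 < f2) (s4 : f2 < f3)
    (h : PatternP7 e f ∨ PatternP7 f e) :
    (e1 < f1 ∧ f1 < e2 ∧ e3 < f2) ∨ (f1 < e1 ∧ e1 < f2 ∧ f3 < e2) := by
  rcases h with ⟨x1, x2, x3, y1, y2, y3, hx, hy, p1, p2, p3, p4, p5⟩ |
    ⟨y1, y2, y3, x1, x2, x3, hy, hx, p1, p2, p3, p4, p5⟩
  · obtain ⟨u1, u2, u3⟩ := eq3 (he.symm.trans hx) s1 s2 (by omega) (by omega)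
    obtain ⟨v1, v2, v3⟩ := eq3 (hf.symm.trans hy) s3 s4 (by omega) (by omega)
    omega
  · obtain ⟨u1, u2, u3⟩ := eq3 (he.symm.trans hx) s1 s2 (by omega) (by omega)
    obtain ⟨v1, v2, v3⟩ := eq3 (hf.symm.trans hy) s3 s4 (by omega) (by omega)
    omega

lemma notQ {e f : Finset ℕ} (h1 : PatternP3 e f ∨ PatternP3 f e)
    (h2 : PatternP7 e f ∨ PatternP7 f e) : False := by
  rcases h1 with ⟨e1, e2, e3, f1, f2, f3, he, hf, p1, p2, p3, p4, p5⟩ |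
    ⟨f1, f2, f3, e1, e2, e3, hf, he, p1, p2, p3, p4, p5⟩
  · have H := q7_arith he hf (by omega) (by omega) (by omega) (by omega) h2
    omega
  · have H := q7_arith he hf (by omega) (by omega) (by omega) (by omega) h2
    omega

lemma trimix {e f g : Finset ℕ}
    (h1 : PatternP3 e f ∨ PatternP3 f e)
    (h2 : PatternP7 f g ∨ PatternP7 g f)
    (h3 : PatternP3 e g ∨ PatternP3 g e ∨ PatternP7 e g ∨ PatternP7 g e) : False := by
  rcases h1 with ⟨e1, e2, e3, f1, f2, f3, he, hf, p1, p2, p3, p4, p5⟩ |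
    ⟨f1, f2, f3, e1, e2, e3, hf, he, p1, p2, p3, p4, p5⟩ <;>
  [ (rcases h2 with ⟨u1, u2, u3, g1, g2, g3, hfu, hg, q1, q2, q3, q4, q5⟩ |
      ⟨g1, g2, g3, u1, u2, u3, hg, hfu, q1, q2, q3, q4, q5⟩);
    (rcases h2 with ⟨u1, u2, u3, g1, g2, g3, hfu, hg, q1, q2, q3, q4, q5⟩ |
      ⟨g1, g2, g3, u1, u2, u3, hg, hfu, q1, q2, q3, q4, q5⟩) ] <;>
  · obtain ⟨w1, w2, w3⟩ := eq3 (hf.symm.trans hfu) (by omega) (by omega) (by omega) (by omega)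
    rcases h3 with h | h | h | h
    · have H := q3_arith he hg (by omega) (by omega) (by omega) (by omega) (Or.inl h); omega
    · have H := q3_arith he hg (by omega) (by omega) (by omega) (by omega) (Or.inr h); omega
    · have H := q7_arith he hg (by omega) (by omega) (by omega) (by omega) (Or.inl h); omega
    · have H := q7_arith he hg (by omega) (by omega) (by omega) (by omega) (Or.inr h); omega

/-- Rigidity: if every pair of edges of an ordered 3-matching forms pattern `P3` or
pattern `P7`, then all pairs form the same pattern. -/
theorem stmt_17 (M : Finset (Finset ℕ))
    (hcard : ∀ e ∈ M, e.card = 3)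
    (hdisj : ∀ e ∈ M, ∀ f ∈ M, e ≠ f → Disjoint e f)
    (hpat : ∀ e ∈ M, ∀ f ∈ M, e ≠ f →
      PatternP3 e f ∨ PatternP3 f e ∨ PatternP7 e f ∨ PatternP7 f e) :
    (∀ e ∈ M, ∀ f ∈ M, e ≠ f → PatternP3 e f ∨ PatternP3 f e) ∨
    (∀ e ∈ M, ∀ f ∈ M, e ≠ f → PatternP7 e f ∨ PatternP7 f e) := by
  by_contra hcon
  push_neg at hcon
  obtain ⟨H3, H7⟩ := hcon
  obtain ⟨a, ha, b, hb, hab, hab3⟩ := H3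
  obtain ⟨c, hc, d, hd, hcd, hcd7⟩ := H7
  have q7 : PatternP7 a b ∨ PatternP7 b a := by
    have := hpat a ha b hb hab; tauto
  have q3 : PatternP3 c d ∨ PatternP3 d c := by
    have := hpat c hc d hd hcd; tauto
  by_cases hca : c = a
  · subst hca
    by_cases hdb : d = b
    · subst hdb; exact notQ q3 q7
    · exact trimix q3.symm q7 (hpat d hd b hb hdb)
  · by_cases hcb : c = b
    · subst hcb
      by_cases hda : d = a
      · subst hda; exact notQ q3.symm q7
      · exact trimix q3.symm q7.symm (hpat d hd a ha hda)
    · by_cases hda : d = a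
      · subst hda; exact trimix q3 q7 (hpat c hc b hb hcb)
      · by_cases hdb : d = b
        · subst hdb; exact trimix q3 q7.symm (hpat c hc a ha hca)
        · have hbridge := hpat d hd a ha hda
          rcases hbridge with h | h | h | h
          · exact trimix (Or.inl h) q7 (hpat d hd b hb hdb)
          · exact trimix (Or.inr h) q7 (hpat d hd b hb hdb)
          · exact trimix q3 (Or.inl h) (hpat c hc a ha hca)
          · exact trimix q3 (Or.inr h) (hpat c hc a ha hca)
end

section
/- Transitivity of alignment-type grouping for patterns P2 = AABBBA and P4 = ABBBAA in 3-matchings: if M is an ordered 3-uniform matching with edges e_1, ..., e_n ordered by their left endpoints, and every pair of edges forms pattern P2 or pattern P4, then for each fixed h the pattern formed by e_h with e_j is the same for all j > h. -/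
/-- Edges `e, f` (3-sets) form pattern `P2 = AABBBA`:
`a1 < a2 < b1 < b2 < b3 < a3`. -/
def PatternP2 (e f : Finset ℕ) : Prop :=
  ∃ a1 a2 a3 b1 b2 b3 : ℕ, e = {a1, a2, a3} ∧ f = {b1, b2, b3} ∧
    a1 < a2 ∧ a2 < b1 ∧ b1 < b2 ∧ b2 < b3 ∧ b3 < a3

/-- Edges `e, f` (3-sets) form pattern `P4 = ABBBAA`:
`a1 < b1 < b2 < b3 < a2 < a3`. -/
def PatternP4 (e f : Finset ℕ) : Prop :=
  ∃ a1 a2 a3 b1 b2 b3 : ℕ, e = {a1, a2, a3} ∧ f = {b1, b2, b3} ∧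
    a1 < b1 ∧ b1 < b2 ∧ b2 < b3 ∧ b3 < a2 ∧ a2 < a3

lemma triple_eq_of_sorted {a1 a2 a3 b1 b2 b3 : ℕ} (ha : a1 < a2) (ha' : a2 < a3)
    (hb : b1 < b2) (hb' : b2 < b3)
    (h : ({a1, a2, a3} : Finset ℕ) = ({b1, b2, b3} : Finset ℕ)) :
    a1 = b1 ∧ a2 = b2 ∧ a3 = b3 := by
  have h1 : a1 ∈ ({b1, b2, b3} : Finset ℕ) := h ▸ (by simp)
  have h2 : a2 ∈ ({b1, b2, b3} : Finset ℕ) := h ▸ (by simp)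
  have h3 : a3 ∈ ({b1, b2, b3} : Finset ℕ) := h ▸ (by simp)
  have h4 : b1 ∈ ({a1, a2, a3} : Finset ℕ) := h.symm ▸ (by simp)
  simp only [Finset.mem_insert, Finset.mem_singleton] at h1 h2 h3 h4
  omega

lemma min_triple_sorted {b1 b2 b3 : ℕ} (h1 : b1 < b2) (h2 : b2 < b3) :
    ({b1, b2, b3} : Finset ℕ).min = (b1 : WithBot ℕ) := by
  simp only [Finset.min_insert, Finset.min_singleton]
  rw [min_eq_left (le_min (by exact_mod_cast h1.le) (by exact_mod_cast (h1.trans h2).le))]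
  rfl

/-- Transitivity of alignment-type grouping for patterns `P2` and `P4`: if the edges
`e 0, …, e (n-1)` of an ordered 3-matching are listed in increasing order of their
minimum elements and every pair forms `P2` or `P4`, then for each fixed `h` the
pattern formed by `e h` with `e j` is the same for all `j > h`. -/
theorem stmt_18 (n : ℕ) (e : Fin n → Finset ℕ)
    (hcard : ∀ i, (e i).card = 3)
    (hdisj : ∀ i j, i ≠ j → Disjoint (e i) (e j))
    (hord : ∀ i j : Fin n, i < j → (e i).min < (e j).min)
    (hpat : ∀ i j : Fin n, i < j → PatternP2 (e i) (e j) ∨ PatternP4 (e i) (e j)) :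
    ∀ h i j : Fin n, h < i → h < j →
      (PatternP2 (e h) (e i) ↔ PatternP2 (e h) (e j)) := by
  intro h
  -- contradiction 1 : P2(h,i) and P4(h,j) with i < j is impossible
  have contra1 : ∀ i j : Fin n, h < i → i < j →
      PatternP2 (e h) (e i) → PatternP4 (e h) (e j) → False := by
    intro i j _ hij hP2 hP4
    obtain ⟨a1, a2, a3, b1, b2, b3, heh, hei, q1, q2, q3, q4, q5⟩ := hP2
    obtain ⟨c1, c2, c3, d1, d2, d3, heh', hej, r1, r2, r3, r4, r5⟩ := hP4
    obtain ⟨_, hac2, _⟩ := triple_eq_of_sorted q1 (q2.trans (q3.trans (q4.trans q5)))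
      (r1.trans (r2.trans (r3.trans r4))) r5 (heh.symm.trans heh')
    have hm := hord i j hij
    rw [hei, hej, min_triple_sorted q3 q4, min_triple_sorted r2 r3] at hm
    have : b1 < d1 := by exact_mod_cast (show (b1 : WithTop ℕ) < (d1 : WithTop ℕ) from hm)
    omega
  -- contradiction 2 : P4(h,i) and P2(h,j) with i < j is impossible
  have contra2 : ∀ i j : Fin n, h < i → i < j →
      PatternP4 (e h) (e i) → PatternP2 (e h) (e j) → False := by
    intro i j _ hij hP4 hP2
    obtain ⟨a1, a2, a3, b1, b2, b3, heh, hei, q1, q2, q3, q4, q5⟩ := hP4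
    obtain ⟨c1, c2, c3, d1, d2, d3, heh', hej, r1, r2, r3, r4, r5⟩ := hP2
    obtain ⟨hac1, hac2, hac3⟩ := triple_eq_of_sorted
      (q1.trans (q2.trans (q3.trans q4))) q5 r1 (r2.trans (r3.trans (r4.trans r5)))
      (heh.symm.trans heh')
    -- e i ⊆ (a1, a2), e j ⊆ (a2, a3); pattern between e i and e j forces e j inside e i
    rcases hpat i j hij with hp | hp
    · obtain ⟨p1, p2, p3, s1, s2, s3, hei', hej', t1, t2, t3, t4, t5⟩ := hp
      obtain ⟨_, _, hp3⟩ := triple_eq_of_sorted q2 q3 t1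
        (t2.trans (t3.trans (t4.trans t5))) (hei.symm.trans hei')
      obtain ⟨hs1, _, _⟩ := triple_eq_of_sorted r3 r4 t3 t4 (hej.symm.trans hej')
      omega
    · obtain ⟨p1, p2, p3, s1, s2, s3, hei', hej', t1, t2, t3, t4, t5⟩ := hp
      obtain ⟨_, _, hp3⟩ := triple_eq_of_sorted q2 q3
        (t1.trans (t2.trans (t3.trans t4))) t5 (hei.symm.trans hei')
      obtain ⟨hs1, _, _⟩ := triple_eq_of_sorted r3 r4 t2 t3 (hej.symm.trans hej')
      omega
  -- key : for i < j the patterns agree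
  have key : ∀ i j : Fin n, h < i → i < j →
      (PatternP2 (e h) (e i) ↔ PatternP2 (e h) (e j)) := by
    intro i j hi hij
    constructor
    · intro hP2
      rcases hpat h j (hi.trans hij) with hp | hp
      · exact hp
      · exact absurd hp (fun hp => contra1 i j hi hij hP2 hp)
    · intro hP2
      rcases hpat h i hi with hp | hp
      · exact hp
      · exact absurd hP2 (fun hP2 => contra2 i j hi hij hp hP2)
  intro i j hi hj
  rcases lt_trichotomy i j with hij | hij | hij
  · exact key i j hi hij
  · rw [hij]
  · exact (key j i hj hij).symm
end

section
/- Expected number of P-cliques bound: let P be any r-pattern and k ≥ 2. The number of k-subsets of [rn] of size rk times the ratio α_{n-k}/α_n, where α_m = (rm)!/((r!)^m · m!), equals ((r!)^k / (rk)!) · n!/(n-k)!, and hence the expected number of P-cliques of size k in a uniformly random ordered r-matching of size n is at most (e^r · r! · n / (rk)^r)^k. -/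
/-- `α_m = (rm)! / ((r!)^m · m!)`, the number of ordered `r`-matchings of size `m`. -/
noncomputable def alphaM (r m : ℕ) : ℝ :=
  (Nat.factorial (r * m) : ℝ) /
    ((Nat.factorial r : ℝ) ^ m * (Nat.factorial m : ℝ))

/-- The expected number of `P`-cliques of size `k` in a uniformly random ordered
`r`-matching of size `n`, namely `C(rn, rk) · α_{n-k}/α_n`, equals
`((r!)^k/(rk)!) · n!/(n-k)!` and is at most `(eʳ · r! · n / (rk)ʳ)^k`. -/
theorem stmt_19 (r n k : ℕ) (hr : 1 ≤ r) (hk : 2 ≤ k) (hkn : k ≤ n) :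
    ((Nat.choose (r * n) (r * k) : ℝ) * (alphaM r (n - k) / alphaM r n)
        = ((Nat.factorial r : ℝ) ^ k / (Nat.factorial (r * k) : ℝ)) *
            ((Nat.factorial n : ℝ) / (Nat.factorial (n - k) : ℝ))) ∧
    ((Nat.choose (r * n) (r * k) : ℝ) * (alphaM r (n - k) / alphaM r n)
        ≤ (Real.exp r * (Nat.factorial r : ℝ) * (n : ℝ) / ((r * k : ℕ) : ℝ) ^ r) ^ k) := by
  obtain ⟨m, rfl⟩ : ∃ m, n = m + k := ⟨n - k, by omega⟩
  have hmk : (m + k) - k = m := by omega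
  have hrk : r * k ≤ r * (m + k) := Nat.mul_le_mul_left r (by omega)
  have hsub : r * (m + k) - r * k = r * m := by rw [Nat.mul_add]; omega
  have hf : ∀ j : ℕ, (0:ℝ) < (j.factorial : ℝ) := fun j => by exact_mod_cast j.factorial_pos
  have heq : ((Nat.choose (r * (m+k)) (r * k) : ℝ) * (alphaM r ((m+k) - k) / alphaM r (m+k))
        = ((Nat.factorial r : ℝ) ^ k / (Nat.factorial (r * k) : ℝ)) *
            ((Nat.factorial (m+k) : ℝ) / (Nat.factorial ((m+k) - k) : ℝ))) := by
    rw [hmk, Nat.cast_choose ℝ hrk, hsub]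
    unfold alphaM
    rw [Nat.mul_add, pow_add]
    have h1 := hf (r * m + r * k)
    have h2 := hf (r * m)
    have h3 := hf (r * k)
    have h4 := hf m
    have h5 := hf (m + k)
    have h6 := hf r
    field_simp
  refine ⟨heq, ?_⟩
  rw [heq, hmk]
  -- notation
  set D : ℝ := ((m+k).descFactorial k : ℝ) with hD
  have hdf : (m.factorial : ℝ) * D = ((m+k).factorial : ℝ) := by
    have := Nat.factorial_mul_descFactorial (show k ≤ m + k by omega)
    rw [hmk] at this
    rw [hD]
    exact_mod_cast this
  have hratio : ((m+k).factorial : ℝ) / (m.factorial : ℝ) = D := by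
    rw [← hdf, mul_div_assoc, mul_comm]
    field_simp
  rw [hratio]
  have hx0 : (0:ℝ) ≤ ((r * k : ℕ) : ℝ) := by positivity
  have hxpos : (0:ℝ) < ((r * k : ℕ) : ℝ) := by
    have : 0 < r * k := Nat.mul_pos (by omega) (by omega)
    exact_mod_cast this
  have hF : (0:ℝ) < ((r * k).factorial : ℝ) := hf _
  have hexp : ((r * k : ℕ) : ℝ) ^ (r * k) ≤ Real.exp ((r * k : ℕ) : ℝ) * ((r * k).factorial : ℝ) := by
    have := Real.pow_div_factorial_le_exp ((r * k : ℕ) : ℝ) hx0 (r * k)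
    rw [div_le_iff₀ hF] at this
    exact this
  have hE : Real.exp r ^ k = Real.exp ((r * k : ℕ) : ℝ) := by
    rw [← Real.exp_nat_mul]
    push_cast
    ring_nf
  have hDle : D ≤ ((m + k : ℕ) : ℝ) ^ k := by
    have := Nat.descFactorial_le_pow (m + k) k
    rw [hD]
    exact_mod_cast this
  rw [div_pow, ← pow_mul, div_mul_eq_mul_div, div_le_div_iff₀ hF (by positivity)]
  calc ((r.factorial : ℝ)) ^ k * D * ((r * k : ℕ) : ℝ) ^ (r * k)
      ≤ ((r.factorial : ℝ)) ^ k * ((m + k : ℕ) : ℝ) ^ k *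
        (Real.exp ((r * k : ℕ) : ℝ) * ((r * k).factorial : ℝ)) := by
        have h1 : (0:ℝ) ≤ ((r.factorial : ℝ)) ^ k := by positivity
        have h2 : (0:ℝ) ≤ D := by positivity
        have h3 : (0:ℝ) ≤ ((r * k : ℕ) : ℝ) ^ (r * k) := by positivity
        nlinarith [mul_le_mul (mul_le_mul_of_nonneg_left hDle h1) hexp h3 (by positivity : (0:ℝ) ≤ ((r.factorial : ℝ)) ^ k * ((m + k : ℕ) : ℝ) ^ k)]
    _ = (Real.exp r * (r.factorial : ℝ) * ((m + k : ℕ) : ℝ)) ^ k * ((r * k).factorial : ℝ) := by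
        rw [mul_pow, mul_pow, hE]
        push_cast
        ring
end
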